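/- arXiv:0801.0929 — 3 statements merged into one kernel-verified Lean document; each statement's English description precedes it below -/
import Mathlib

section
/- Let K be a field, let A be a configuration in K[t_1,…,t_d], and for each i = 1,…,d let B_i = {m_1^{(i)},…,m_{λ_i}^{(i)}} be a configuration in a polynomial ring K[u^{(i)}] in μ_i variables, where the variable sets u^{(1)},…,u^{(d)} are pairwise disjoint. For each monomial M of the nested configuration A(B_1,…,B_d) fix one expression M = m_{j_1}^{(i_1)}⋯m_{j_r}^{(i_r)} with t_{i_1}⋯t_{i_r} ∈ A, and for each j = 1,…,d let φ_j : K[x_M : M ∈ A(B_1,…,B_d)] → K[z_1^{(j)},…,z_{λ_j}^{(j)}] be the K-algebra homomorphism sending x_M to ∏_{k : i_k = j} z_{j_k}^{(j)}. Then a binomial f in K[x_M : M ∈ A(B_1,…,B_d)] belongs to the toric ideal I_{A(B_1,…,B_d)} if and only if φ_j(f) belongs to the toric ideal I_{B_j} for every j = 1,…,d. -/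
open MvPolynomial

/-- Total degree of an exponent vector. -/
def expDeg {σ : Type*} (a : σ →₀ ℕ) : ℕ := a.sum fun _ e => e

/-- A set of monomials (given by exponent vectors) is a configuration if some nonnegative
weight vector gives every member weight `1`. -/
def IsConfig {σ : Type*} (A : Set (σ →₀ ℕ)) : Prop :=
  ∃ w : σ → ℝ, (∀ i, 0 ≤ w i) ∧ ∀ a ∈ A, (a.sum fun i e => w i * (e : ℝ)) = 1

/-- The `K`-algebra homomorphism sending the variable indexed by `s` to the monomial with
exponent vector `v s`. -/
noncomputable def toricHom (K : Type*) [Field K] {σ τ : Type*} (v : σ → (τ →₀ ℕ)) :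
    MvPolynomial σ K →ₐ[K] MvPolynomial τ K :=
  MvPolynomial.aeval fun s => MvPolynomial.monomial (v s) (1 : K)

/-- The toric ideal of a family of monomials (given by exponent vectors). -/
noncomputable def toricIdeal (K : Type*) [Field K] {σ τ : Type*} (v : σ → (τ →₀ ℕ)) :
    Ideal (MvPolynomial σ K) :=
  RingHom.ker (toricHom K v)

/-- `r` is a monomial order: a linear order, compatible with addition, with `0` least. -/
def IsMonomialOrder {σ : Type*} (r : (σ →₀ ℕ) → (σ →₀ ℕ) → Prop) : Prop :=
  IsLinearOrder (σ →₀ ℕ) r ∧ (∀ a, r 0 a) ∧ ∀ a b c, r a b → r (a + c) (b + c)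

/-- `m` is the leading monomial (exponent) of `f` with respect to the monomial order `r`. -/
def IsLeadingMonomial {σ K : Type*} [CommSemiring K]
    (r : (σ →₀ ℕ) → (σ →₀ ℕ) → Prop) (f : MvPolynomial σ K) (m : σ →₀ ℕ) : Prop :=
  m ∈ f.support ∧ ∀ m' ∈ f.support, r m' m

/-- `G` is a Gröbner basis of `I` w.r.t. `r`: `G ⊆ I` and the leading monomial of every
nonzero element of `I` is divisible by the leading monomial of some element of `G`. -/
def IsGroebnerBasis {σ K : Type*} [Field K] (r : (σ →₀ ℕ) → (σ →₀ ℕ) → Prop)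
    (I : Ideal (MvPolynomial σ K)) (G : Set (MvPolynomial σ K)) : Prop :=
  (∀ g ∈ G, g ∈ I) ∧
  ∀ f ∈ I, f ≠ 0 → ∀ mf, IsLeadingMonomial r f mf →
    ∃ g ∈ G, ∃ mg, IsLeadingMonomial r g mg ∧ mg ≤ mf

/-- `G` is the reduced Gröbner basis: a Gröbner basis, leading coefficients `1`, and no
monomial of an element is divisible by the leading monomial of another element. -/
def IsReducedGroebnerBasis {σ K : Type*} [Field K] (r : (σ →₀ ℕ) → (σ →₀ ℕ) → Prop)
    (I : Ideal (MvPolynomial σ K)) (G : Set (MvPolynomial σ K)) : Prop :=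
  IsGroebnerBasis r I G ∧
  (∀ g ∈ G, ∀ m, IsLeadingMonomial r g m → MvPolynomial.coeff m g = 1) ∧
  ∀ g ∈ G, ∀ g' ∈ G, g' ≠ g → ∀ m ∈ g.support, ∀ m', IsLeadingMonomial r g' m' → ¬ m' ≤ m

/-- A homogeneous binomial of degree 2, i.e. a difference of two distinct quadratic monomials. -/
def IsQuadBinomial {σ K : Type*} [CommRing K] (f : MvPolynomial σ K) : Prop :=
  ∃ a b : σ →₀ ℕ, a ≠ b ∧ expDeg a = 2 ∧ expDeg b = 2 ∧
    f = MvPolynomial.monomial a (1 : K) - MvPolynomial.monomial b (1 : K)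

/-- `I` possesses a quadratic Gröbner basis. -/
def HasQuadraticGB {σ K : Type*} [Field K] (I : Ideal (MvPolynomial σ K)) : Prop :=
  ∃ r, IsMonomialOrder r ∧ ∃ G, (∀ g ∈ G, IsQuadBinomial g) ∧ IsGroebnerBasis r I G

/-- The initial ideal of `I` w.r.t. `r`: ideal generated by the leading monomials of the
nonzero elements of `I`. -/
noncomputable def initialIdeal {σ K : Type*} [Field K] (r : (σ →₀ ℕ) → (σ →₀ ℕ) → Prop)
    (I : Ideal (MvPolynomial σ K)) : Ideal (MvPolynomial σ K) :=
  Ideal.span {p | ∃ f ∈ I, f ≠ 0 ∧ ∃ m, IsLeadingMonomial r f m ∧ p = MvPolynomial.monomial m (1 : K)}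

/-- A squarefree exponent vector. -/
def SquarefreeExp {σ : Type*} (m : σ →₀ ℕ) : Prop := ∀ i, m i ≤ 1

/-- The nested configuration `A(B_1, …, B_d)`. -/
def NestedConfig {d : ℕ} {lam mu : Fin d → ℕ} (A : Set (Fin d →₀ ℕ))
    (B : (i : Fin d) → Fin (lam i) → (Fin (mu i) →₀ ℕ)) :
    Set ((Σ i : Fin d, Fin (mu i)) →₀ ℕ) :=
  { M | ∃ n : ℕ, 1 ≤ n ∧ ∃ s : Fin n → Σ i : Fin d, Fin (lam i),
      (∑ k, Finsupp.single (s k).1 1) ∈ A ∧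
      M = ∑ k, Finsupp.mapDomain (Sigma.mk (s k).1) (B (s k).1 (s k).2) }

/-- The exponent vector of `φ_j(x_M)` determined by the chosen standard expressions. -/
noncomputable def phiExp {d : ℕ} {lam mu : Fin d → ℕ} {A : Set (Fin d →₀ ℕ)}
    {B : (i : Fin d) → Fin (lam i) → (Fin (mu i) →₀ ℕ)}
    (n : ↥(NestedConfig A B) → ℕ)
    (s : (M : ↥(NestedConfig A B)) → Fin (n M) → Σ i : Fin d, Fin (lam i))
    (j : Fin d) (M : ↥(NestedConfig A B)) : Fin (lam j) →₀ ℕ :=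
  ∑ k : Fin (n M), if h : (s M k).1 = j
    then Finsupp.single (Fin.cast (congrArg lam h) (s M k).2) 1 else 0

/-- `toricHom` sends a monomial (with coefficient 1) to the monomial whose exponent is the
corresponding linear combination of the exponent vectors. -/
lemma toricHom_monomial_one {K : Type*} [Field K] {σ τ : Type*} (v : σ → (τ →₀ ℕ))
    (c : σ →₀ ℕ) :
    toricHom K v (MvPolynomial.monomial c (1 : K)) =
      MvPolynomial.monomial (Finsupp.linearCombination ℕ v c) (1 : K) := by
  classical
  induction c using Finsupp.induction with
  | zero => simp [toricHom]
  | single_add a e c ha he ih =>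
    have h1 : toricHom K v (MvPolynomial.monomial (Finsupp.single a e) (1 : K)) =
        MvPolynomial.monomial (e • v a) (1 : K) := by
      rw [toricHom, MvPolynomial.aeval_monomial,
        Finsupp.prod_single_index (by simp)]
      simp [MvPolynomial.monomial_pow]
    have h2 : (MvPolynomial.monomial (Finsupp.single a e + c) (1 : K)) =
        MvPolynomial.monomial (Finsupp.single a e) (1 : K) * MvPolynomial.monomial c (1:K) := by
      simp [MvPolynomial.monomial_mul]
    rw [h2, map_mul, h1, ih, MvPolynomial.monomial_mul, map_add, one_mul]
    simp

lemma mem_toricIdeal_binomial_iff {K : Type*} [Field K] {σ τ : Type*} (v : σ → (τ →₀ ℕ))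
    (a b : σ →₀ ℕ) :
    (MvPolynomial.monomial a (1 : K) - MvPolynomial.monomial b (1 : K)) ∈ toricIdeal K v ↔
      Finsupp.linearCombination ℕ v a = Finsupp.linearCombination ℕ v b := by
  rw [toricIdeal, RingHom.mem_ker, map_sub, toricHom_monomial_one, toricHom_monomial_one,
    sub_eq_zero, MvPolynomial.monomial_eq_monomial_iff]
  simp

/-- On each monomial `M` of the nested configuration, restricting the exponent vector to the
`j`-th block of variables gives exactly the exponent vector of `π_j(φ_j(x_M))`. -/
lemma fiber_eq {d : ℕ} {lam mu : Fin d → ℕ}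
    {A : Set (Fin d →₀ ℕ)} {B : (i : Fin d) → Fin (lam i) → (Fin (mu i) →₀ ℕ)}
    (n : ↥(NestedConfig A B) → ℕ)
    (s : (M : ↥(NestedConfig A B)) → Fin (n M) → Σ i : Fin d, Fin (lam i))
    (hsM : ∀ M : ↥(NestedConfig A B),
      (M : (Σ i : Fin d, Fin (mu i)) →₀ ℕ) =
        ∑ k, Finsupp.mapDomain (Sigma.mk (s M k).1) (B (s M k).1 (s M k).2))
    (j : Fin d) (M : ↥(NestedConfig A B)) :
    Finsupp.lcomapDomain (R := ℕ) (Sigma.mk j) sigma_mk_injective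
        (M : (Σ i : Fin d, Fin (mu i)) →₀ ℕ) =
      Finsupp.linearCombination ℕ (B j) (phiExp n s j M) := by
  classical
  rw [hsM, phiExp, map_sum, map_sum]
  refine Finset.sum_congr rfl fun k _ => ?_
  by_cases h : (s M k).1 = j
  · subst h
    rw [dif_pos rfl]
    ext k'
    simp [Finsupp.lcomapDomain, Finsupp.comapDomain_apply,
      Finsupp.mapDomain_apply sigma_mk_injective, Finsupp.linearCombination_single]
  · rw [dif_neg h, map_zero]
    ext k'
    show Finsupp.comapDomain _ _ _ k' = (0 : Fin (mu j) →₀ ℕ) k'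
    rw [Finsupp.comapDomain_apply, Finsupp.coe_zero, Pi.zero_apply]
    exact Finsupp.mapDomain_notin_range _ _ (fun ⟨x, hx⟩ => h (congrArg Sigma.fst hx))

/-- Lemma `keylemma`, equivalence part: a binomial `f` lies in the toric
ideal of the nested configuration `A(B_1,…,B_d)` iff `φ_j(f)` lies in `I_{B_j}` for all `j`. -/
theorem binomial_mem_nested_toricIdeal_iff
    {K : Type*} [Field K] {d : ℕ} {lam mu : Fin d → ℕ}
    (A : Finset (Fin d →₀ ℕ))
    (B : (i : Fin d) → Fin (lam i) → (Fin (mu i) →₀ ℕ))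
    (hA : IsConfig (↑A : Set (Fin d →₀ ℕ)))
    (hB : ∀ i, IsConfig (Set.range (B i)))
    -- a fixed expression `M = m_{j_1}^{(i_1)} ⋯ m_{j_r}^{(i_r)}` for each `M ∈ A(B_1,…,B_d)`
    (n : ↥(NestedConfig (↑A : Set (Fin d →₀ ℕ)) B) → ℕ)
    (s : (M : ↥(NestedConfig (↑A : Set (Fin d →₀ ℕ)) B)) → Fin (n M) → Σ i : Fin d, Fin (lam i))
    (hn : ∀ M, 1 ≤ n M)
    (hsA : ∀ M, (∑ k, Finsupp.single (s M k).1 1) ∈ A)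
    (hsM : ∀ M : ↥(NestedConfig (↑A : Set (Fin d →₀ ℕ)) B),
      (M : (Σ i : Fin d, Fin (mu i)) →₀ ℕ) =
        ∑ k, Finsupp.mapDomain (Sigma.mk (s M k).1) (B (s M k).1 (s M k).2))
    -- a binomial `f`
    (f : MvPolynomial (↥(NestedConfig (↑A : Set (Fin d →₀ ℕ)) B)) K)
    (a b : (↥(NestedConfig (↑A : Set (Fin d →₀ ℕ)) B)) →₀ ℕ)
    (hf : f = MvPolynomial.monomial a (1 : K) - MvPolynomial.monomial b (1 : K)) :
    f ∈ toricIdeal K (fun M : ↥(NestedConfig (↑A : Set (Fin d →₀ ℕ)) B) =>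
        (M : (Σ i : Fin d, Fin (mu i)) →₀ ℕ)) ↔
      ∀ j : Fin d, toricHom K (phiExp n s j) f ∈ toricIdeal K (B j) := by
  classical
  let V : ↥(NestedConfig (↑A : Set (Fin d →₀ ℕ)) B) → ((Σ i : Fin d, Fin (mu i)) →₀ ℕ) :=
    fun M => (M : _)
  have key : ∀ (c : ↥(NestedConfig (↑A : Set (Fin d →₀ ℕ)) B) →₀ ℕ) (j : Fin d),
      Finsupp.lcomapDomain (R := ℕ) (Sigma.mk j) sigma_mk_injective
          (Finsupp.linearCombination ℕ V c) =
        Finsupp.linearCombination ℕ (B j) (Finsupp.linearCombination ℕ (phiExp n s j) c) := by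
    intro c j
    induction c using Finsupp.induction_linear with
    | zero => simp
    | add p q hp hq => rw [map_add, map_add, map_add, map_add, hp, hq]
    | single M e =>
        rw [Finsupp.linearCombination_single, Finsupp.linearCombination_single,
          map_smul, map_smul, fiber_eq n s hsM j M]
  subst hf
  rw [mem_toricIdeal_binomial_iff]
  constructor
  · intro h j
    rw [map_sub, toricHom_monomial_one, toricHom_monomial_one,
      mem_toricIdeal_binomial_iff, ← key, ← key, h]
  · intro h
    ext x
    obtain ⟨j, k⟩ := x
    have hj := h j
    rw [map_sub, toricHom_monomial_one, toricHom_monomial_one,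
      mem_toricIdeal_binomial_iff, ← key, ← key] at hj
    calc Finsupp.linearCombination ℕ V a ⟨j, k⟩
        = Finsupp.lcomapDomain (R := ℕ) (Sigma.mk j) sigma_mk_injective
            (Finsupp.linearCombination ℕ V a) k := rfl
      _ = Finsupp.lcomapDomain (R := ℕ) (Sigma.mk j) sigma_mk_injective
            (Finsupp.linearCombination ℕ V b) k := by rw [hj]
      _ = Finsupp.linearCombination ℕ V b ⟨j, k⟩ := rfl
end

section
/- Let K be a field, let A be a configuration in K[t_1,…,t_d], and for each i = 1,…,d let B_i = {m_1^{(i)},…,m_{λ_i}^{(i)}} be a configuration in a polynomial ring K[u^{(i)}] in μ_i variables, where the variable sets u^{(1)},…,u^{(d)} are pairwise disjoint. For each monomial M of the nested configuration A(B_1,…,B_d) fix one expression M = m_{j_1}^{(i_1)}⋯m_{j_r}^{(i_r)} with t_{i_1}⋯t_{i_r} ∈ A; let φ_0 : K[x_M : M ∈ A(B_1,…,B_d)] → K[y] be the K-algebra homomorphism sending x_M to the variable y_{i_1⋯i_r}, where K[y] is the polynomial ring presenting A via π_0(y_{i_1⋯i_r}) = t_{i_1}⋯t_{i_r}, and for j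 = 1,…,d let φ_j send x_M to ∏_{k : i_k = j} z_{j_k}^{(j)} in K[z_1^{(j)},…,z_{λ_j}^{(j)}]. If f is a binomial in K[x_M : M ∈ A(B_1,…,B_d)] such that φ_j(f) ∈ I_{B_j} for all j = 1,…,d, then φ_0(f) belongs to the toric ideal I_A. -/
open MvPolynomial

section Aux

private lemma prod_monomial_one {K τ ι : Type*} [CommSemiring K] (t : Finset ι)
    (g : ι → (τ →₀ ℕ)) :
    (∏ i ∈ t, MvPolynomial.monomial (g i) (1 : K)) = MvPolynomial.monomial (∑ i ∈ t, g i) 1 := by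
  classical
  induction t using Finset.cons_induction with
  | empty => simp
  | cons i t hi ih =>
      rw [Finset.prod_cons, Finset.sum_cons, ih, MvPolynomial.monomial_mul, one_mul]

private lemma toricHom_monomial {K : Type*} [Field K] {σ τ : Type*} (v : σ → (τ →₀ ℕ))
    (a : σ →₀ ℕ) :
    toricHom K v (MvPolynomial.monomial a (1 : K)) =
      MvPolynomial.monomial (a.sum fun i e => e • v i) 1 := by
  rw [toricHom, MvPolynomial.aeval_monomial, map_one, one_mul, Finsupp.prod, Finsupp.sum,
    ← prod_monomial_one]
  refine Finset.prod_congr rfl fun i _ => ?_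
  rw [MvPolynomial.monomial_pow, one_pow]

private def expDegHom (σ : Type*) : (σ →₀ ℕ) →+ ℕ where
  toFun := expDeg
  map_zero' := Finsupp.sum_zero_index
  map_add' a b := by
    show expDeg (a + b) = expDeg a + expDeg b
    exact Finsupp.sum_add_index' (fun _ => rfl) (fun _ _ _ => rfl)

private lemma expDegHom_apply {σ : Type*} (m : σ →₀ ℕ) : expDegHom σ m = expDeg m := rfl

private noncomputable def wtHom {τ : Type*} (w : τ → ℝ) : (τ →₀ ℕ) →+ ℝ where
  toFun m := m.sum fun i e => w i * (e : ℝ)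
  map_zero' := Finsupp.sum_zero_index
  map_add' a b := by
    show (a + b).sum (fun i e => w i * (e : ℝ)) = a.sum (fun i e => w i * (e : ℝ)) + b.sum (fun i e => w i * (e : ℝ))
    exact Finsupp.sum_add_index' (fun i => by simp) (fun i e₁ e₂ => by push_cast; ring)

private lemma wtHom_apply {τ : Type*} (w : τ → ℝ) (m : τ →₀ ℕ) :
    wtHom w m = m.sum fun i e => w i * (e : ℝ) := rfl

private lemma expDeg_finsuppSum {σ ι : Type*} (c : ι →₀ ℕ) (p : ι → (σ →₀ ℕ)) :
    expDeg (c.sum fun i e => e • p i) = c.sum fun i e => e * expDeg (p i) := by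
  rw [← expDegHom_apply, map_finsuppSum]
  refine Finsupp.sum_congr fun i _ => ?_
  rw [map_nsmul, smul_eq_mul, expDegHom_apply]

private lemma expDeg_phiExp {d : ℕ} {lam mu : Fin d → ℕ} {A : Set (Fin d →₀ ℕ)}
    {B : (i : Fin d) → Fin (lam i) → (Fin (mu i) →₀ ℕ)}
    (n : ↥(NestedConfig A B) → ℕ)
    (s : (M : ↥(NestedConfig A B)) → Fin (n M) → Σ i : Fin d, Fin (lam i))
    (j : Fin d) (M : ↥(NestedConfig A B)) :
    expDeg (phiExp n s j M) = (∑ k : Fin (n M), Finsupp.single (s M k).1 1) j := by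
  classical
  rw [phiExp, ← expDegHom_apply, map_sum, Finsupp.finset_sum_apply]
  refine Finset.sum_congr rfl fun k _ => ?_
  rw [expDegHom_apply]
  by_cases h : (s M k).1 = j
  · simp [h, expDeg, Finsupp.single_apply]
  · simp [h, expDeg, Finsupp.single_apply, Ne.symm h]

private lemma wt_eq_card {τ : Type*} (w : τ → ℝ) {lamj : ℕ} (u : Fin lamj → (τ →₀ ℕ))
    (hu : ∀ k, wtHom w (u k) = 1) (c : Fin lamj →₀ ℕ) :
    wtHom w (c.sum fun k e => e • u k) = (expDeg c : ℝ) := by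
  rw [map_finsuppSum]
  have h1 : ∀ k (e : ℕ), wtHom w (e • u k) = (e : ℝ) * wtHom w (u k) := by
    intro k e; rw [map_nsmul, nsmul_eq_mul]
  have h2 : (c.sum fun k e => wtHom w (e • u k)) = c.sum fun k e => (e : ℝ) :=
    Finsupp.sum_congr fun k _ => by rw [h1, hu k, mul_one]
  rw [h2, expDeg, Finsupp.sum, Finsupp.sum, Nat.cast_sum]

end Aux

/-- Lemma `keylemma`, final part: if `φ_j(f) ∈ I_{B_j}` for all `j = 1,…,d`
for a binomial `f`, then `φ_0(f)` lies in the toric ideal `I_A`. -/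
theorem phi_zero_mem_toricIdeal
    {K : Type*} [Field K] {d : ℕ} {lam mu : Fin d → ℕ}
    (A : Finset (Fin d →₀ ℕ))
    (B : (i : Fin d) → Fin (lam i) → (Fin (mu i) →₀ ℕ))
    (hA : IsConfig (↑A : Set (Fin d →₀ ℕ)))
    (hB : ∀ i, IsConfig (Set.range (B i)))
    -- a fixed expression `M = m_{j_1}^{(i_1)} ⋯ m_{j_r}^{(i_r)}` for each `M ∈ A(B_1,…,B_d)`
    (n : ↥(NestedConfig (↑A : Set (Fin d →₀ ℕ)) B) → ℕ)
    (s : (M : ↥(NestedConfig (↑A : Set (Fin d →₀ ℕ)) B)) → Fin (n M) → Σ i : Fin d, Fin (lam i))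
    (hn : ∀ M, 1 ≤ n M)
    (hsA : ∀ M, (∑ k, Finsupp.single (s M k).1 1) ∈ A)
    (hsM : ∀ M : ↥(NestedConfig (↑A : Set (Fin d →₀ ℕ)) B),
      (M : (Σ i : Fin d, Fin (mu i)) →₀ ℕ) =
        ∑ k, Finsupp.mapDomain (Sigma.mk (s M k).1) (B (s M k).1 (s M k).2))
    -- a binomial `f`
    (f : MvPolynomial (↥(NestedConfig (↑A : Set (Fin d →₀ ℕ)) B)) K)
    (a b : (↥(NestedConfig (↑A : Set (Fin d →₀ ℕ)) B)) →₀ ℕ)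
    (hf : f = MvPolynomial.monomial a (1 : K) - MvPolynomial.monomial b (1 : K))
    -- `φ_j(f) ∈ I_{B_j}` for all `j`
    (hphi : ∀ j : Fin d, toricHom K (phiExp n s j) f ∈ toricIdeal K (B j)) :
    -- `φ_0(f) ∈ I_A`, where `φ_0(x_M) = y_{i_1⋯i_r}` and `π_0(y_{i_1⋯i_r}) = t_{i_1}⋯t_{i_r}`
    toricHom K (fun M : ↥(NestedConfig (↑A : Set (Fin d →₀ ℕ)) B) =>
        Finsupp.single (⟨∑ k, Finsupp.single (s M k).1 1, hsA M⟩ : {x : Fin d →₀ ℕ // x ∈ A}) 1) f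
      ∈ toricIdeal K (fun y : {x : Fin d →₀ ℕ // x ∈ A} => y.1) := by
  classical
  -- key degree equality for each j
  have key : ∀ j : Fin d,
      (a.sum fun M e => e * expDeg (phiExp n s j M)) =
      (b.sum fun M e => e * expDeg (phiExp n s j M)) := by
    intro j
    have h0 : toricHom K (B j) (toricHom K (phiExp n s j) f) = 0 := by
      have := hphi j
      rwa [toricIdeal, RingHom.mem_ker] at this
    set ca := a.sum fun M e => e • phiExp n s j M with hca
    set cb := b.sum fun M e => e • phiExp n s j M with hcb
    have h1 : toricHom K (phiExp n s j) f =
        MvPolynomial.monomial ca (1 : K) - MvPolynomial.monomial cb 1 := by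
      rw [hf, map_sub, toricHom_monomial, toricHom_monomial]
    set Da := ca.sum fun k e => e • B j k with hDa
    set Db := cb.sum fun k e => e • B j k with hDb
    have h2 : MvPolynomial.monomial Da (1 : K) = MvPolynomial.monomial Db 1 := by
      rw [h1, map_sub, toricHom_monomial, toricHom_monomial, sub_eq_zero] at h0
      exact h0
    have hD : Da = Db := by
      have h3 := congrArg (MvPolynomial.coeff Da) h2
      rw [MvPolynomial.coeff_monomial, MvPolynomial.coeff_monomial, if_pos rfl] at h3
      by_contra hne
      rw [if_neg (fun h => hne h.symm)] at h3
      exact one_ne_zero h3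
    obtain ⟨w, hw0, hw1⟩ := hB j
    have hu : ∀ k, wtHom w (B j k) = 1 := fun k => hw1 _ ⟨k, rfl⟩
    have h4 : expDeg ca = expDeg cb := by
      have h3 : (expDeg ca : ℝ) = (expDeg cb : ℝ) := by
        rw [← wt_eq_card w _ hu ca, ← wt_eq_card w _ hu cb, ← hDa, ← hDb, hD]
      exact_mod_cast h3
    rw [hca, hcb, expDeg_finsuppSum, expDeg_finsuppSum] at h4
    exact h4
  -- the exponent-vector equality in `Fin d →₀ ℕ`
  have hE : (a.sum fun M e => e • (∑ k : Fin (n M), Finsupp.single (s M k).1 1)) =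
            (b.sum fun M e => e • (∑ k : Fin (n M), Finsupp.single (s M k).1 1)) := by
    ext j
    have hc : ∀ c : (↥(NestedConfig (↑A : Set (Fin d →₀ ℕ)) B)) →₀ ℕ,
        ((c.sum fun M e => e • (∑ k : Fin (n M), Finsupp.single (s M k).1 1)) j) =
          c.sum fun M e => e * expDeg (phiExp n s j M) := by
      intro c
      rw [Finsupp.sum, Finsupp.finset_sum_apply, Finsupp.sum]
      refine Finset.sum_congr rfl fun M _ => ?_
      rw [Finsupp.smul_apply, smul_eq_mul, expDeg_phiExp]
    rw [hc, hc]
    exact key j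
  -- composition of the two toric homs
  have hcomp : (toricHom K (fun y : {x : Fin d →₀ ℕ // x ∈ A} => y.1)).comp
      (toricHom K (fun M : ↥(NestedConfig (↑A : Set (Fin d →₀ ℕ)) B) =>
        Finsupp.single (⟨∑ k, Finsupp.single (s M k).1 1, hsA M⟩ : {x : Fin d →₀ ℕ // x ∈ A}) 1))
      = toricHom K (fun M : ↥(NestedConfig (↑A : Set (Fin d →₀ ℕ)) B) =>
          ∑ k, Finsupp.single (s M k).1 1) := by
    apply MvPolynomial.algHom_ext
    intro M
    simp only [AlgHom.comp_apply, toricHom, MvPolynomial.aeval_X]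
    rw [MvPolynomial.aeval_monomial, map_one, one_mul,
      Finsupp.prod_single_index (by exact pow_zero _), pow_one]
  rw [toricIdeal, RingHom.mem_ker, ← AlgHom.comp_apply, hcomp, hf, map_sub,
    toricHom_monomial, toricHom_monomial, sub_eq_zero]
  exact congrArg (fun c => MvPolynomial.monomial c (1 : K)) hE
end

section
/- Let K be a field and let 𝒜 be a configuration of Segre–Veronese type in K[t_1,…,t_d] with data τ ≥ 2, b = (b_1,…,b_n), c = (c_1,…,c_n), p = (p_1,…,p_n), q = (q_1,…,q_n). Let G be the set of all binomials x_{ℓ_1ℓ_2⋯ℓ_τ} x_{m_1m_2⋯m_τ} − x_{n_1n_3⋯n_{2τ−1}} x_{n_2n_4⋯n_{2τ}} in K[X], where n_1n_2⋯n_{2τ} = sort(ℓ_1m_1ℓ_2m_2⋯ℓ_τm_τ). Then there exists a monomial order on K[X] such that G is the reduced Gröbner basis of the toric ideal I_𝒜, and the initial ideal of I_𝒜 is generated by squarefree quadratic (nonsorted) monomials. -/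
open MvPolynomial

/-- The Segre–Veronese configuration: monomials of total degree `τ` whose partial degrees
on the intervals `[p i, q i]` lie between `c i` and `b i`. -/
def SVConfig (d τ n : ℕ) (b c : Fin n → ℕ) (p q : Fin n → Fin d) : Set (Fin d →₀ ℕ) :=
  { f | expDeg f = τ ∧
      ∀ i, c i ≤ (∑ j ∈ Finset.Icc (p i) (q i), f j) ∧
        (∑ j ∈ Finset.Icc (p i) (q i), f j) ≤ b i }

/-- Index type for the variables `x_{j_1 ⋯ j_τ}` of `K[X]`: weakly increasing tuples whose
associated monomial belongs to the Segre–Veronese configuration. -/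
abbrev SVIdx (d τ n : ℕ) (b c : Fin n → ℕ) (p q : Fin n → Fin d) : Type :=
  { j : Fin τ → Fin d // Monotone j ∧ (∑ k, Finsupp.single (j k) 1) ∈ SVConfig d τ n b c p q }

/-- The odd-position subsequence `n_1 n_3 ⋯ n_{2τ-1}` of a `2τ`-tuple. -/
def oddPart {α : Type*} {τ : ℕ} (nn : Fin (2 * τ) → α) : Fin τ → α :=
  fun k => nn ⟨2 * k.1, by have := k.isLt; omega⟩

/-- The even-position subsequence `n_2 n_4 ⋯ n_{2τ}` of a `2τ`-tuple. -/
def evenPart {α : Type*} {τ : ℕ} (nn : Fin (2 * τ) → α) : Fin τ → α :=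
  fun k => nn ⟨2 * k.1 + 1, by have := k.isLt; omega⟩

/-- The pair of weakly increasing tuples `l, m` is sorted:
`l_1 ≤ m_1 ≤ l_2 ≤ m_2 ≤ ⋯ ≤ l_τ ≤ m_τ`. -/
def PairSorted {τ d : ℕ} (l m : Fin τ → Fin d) : Prop :=
  (∀ k, l k ≤ m k) ∧ ∀ (k : Fin τ) (h : k.1 + 1 < τ), m k ≤ l ⟨k.1 + 1, h⟩

/-- The set `G` of sorting binomials
`x_{ℓ_1⋯ℓ_τ} x_{m_1⋯m_τ} − x_{n_1n_3⋯n_{2τ−1}} x_{n_2n_4⋯n_{2τ}}`,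
where `n_1 n_2 ⋯ n_{2τ} = sort(ℓ_1 m_1 ℓ_2 m_2 ⋯ ℓ_τ m_τ)`. -/
def sortingSet (K : Type*) [Field K] (d τ n : ℕ) (b c : Fin n → ℕ) (p q : Fin n → Fin d) :
    Set (MvPolynomial (SVIdx d τ n b c p q) K) :=
  { f | ∃ l m : SVIdx d τ n b c p q, ∃ nn : Fin (2 * τ) → Fin d, Monotone nn ∧
      (∑ k, Finsupp.single (nn k) 1) =
        (∑ k, Finsupp.single (l.1 k) 1) + (∑ k, Finsupp.single (m.1 k) 1) ∧
      ∃ (h1 : Monotone (oddPart nn) ∧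
          (∑ k, Finsupp.single (oddPart nn k) 1) ∈ SVConfig d τ n b c p q)
        (h2 : Monotone (evenPart nn) ∧
          (∑ k, Finsupp.single (evenPart nn k) 1) ∈ SVConfig d τ n b c p q),
        f = MvPolynomial.X l * MvPolynomial.X m -
            MvPolynomial.X (⟨oddPart nn, h1⟩ : SVIdx d τ n b c p q) *
            MvPolynomial.X (⟨evenPart nn, h2⟩ : SVIdx d τ n b c p q) }

namespace SGB


variable {d T : ℕ}

/-- number of entries of the chain `j` that are `≥ t`. -/
def chS (j : Fin T → Fin d) (t : ℕ) : ℕ := ∑ k : Fin T, if t ≤ (j k).1 then 1 else 0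

lemma cntGe (T c : ℕ) : ∑ k : Fin T, (if c ≤ k.1 then 1 else 0) = T - c := by
  induction T with
  | zero => simp
  | succ T ih =>
    rw [Fin.sum_univ_castSucc]
    simp only [Fin.coe_castSucc, Fin.val_last, ih]
    split_ifs <;> omega

lemma chS_le (j : Fin T → Fin d) (t : ℕ) : chS j t ≤ T := by
  calc chS j t ≤ ∑ _k : Fin T, 1 := Finset.sum_le_sum (fun k _ => by split_ifs <;> simp)
  _ = T := by simp

lemma chS_zero_of_ge (j : Fin T → Fin d) {t : ℕ} (h : d ≤ t) : chS j t = 0 := by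
  refine Finset.sum_eq_zero fun k _ => ?_
  have := (j k).isLt
  rw [if_neg (by omega)]

lemma le_chS_iff {j : Fin T → Fin d} (hj : Monotone j) (k : Fin T) (t : ℕ) :
    t ≤ (j k).1 ↔ T - k.1 ≤ chS j t := by
  constructor
  · intro h
    have : ∑ k' : Fin T, (if k.1 ≤ k'.1 then 1 else 0) ≤ chS j t := by
      refine Finset.sum_le_sum fun k' _ => ?_
      split_ifs with h1 h2
      · rfl
      · exact absurd (le_trans h (hj (show k ≤ k' from h1))) h2
      · exact Nat.zero_le _
      · rfl
    rwa [cntGe] at this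
  · intro h
    by_contra hc
    push_neg at hc
    have : chS j t ≤ ∑ k' : Fin T, (if k.1 + 1 ≤ k'.1 then 1 else 0) := by
      refine Finset.sum_le_sum fun k' _ => ?_
      split_ifs with h1 h2
      · rfl
      · -- t ≤ j k' but k' ≤ k, so j k' ≤ j k < t
        exfalso
        have : k' ≤ k := by omega
        have := hj this
        omega
      · exact Nat.zero_le _
      · rfl
    rw [cntGe] at this
    have := k.isLt
    omega

lemma chain_ext {j j' : Fin T → Fin d} (hj : Monotone j) (hj' : Monotone j')
    (h : ∀ t, chS j t = chS j' t) : j = j' := by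
  funext k
  have h1 : (j k).1 ≤ (j' k).1 := by
    have := (le_chS_iff hj k (j k).1).1 le_rfl
    rw [h] at this
    exact (le_chS_iff hj' k (j k).1).2 this
  have h2 : (j' k).1 ≤ (j k).1 := by
    have := (le_chS_iff hj' k (j' k).1).1 le_rfl
    rw [← h] at this
    exact (le_chS_iff hj k (j' k).1).2 this
  exact Fin.ext (le_antisymm h1 h2)

lemma pairSorted_iff {l m : Fin T → Fin d} (hl : Monotone l) (hm : Monotone m) :
    PairSorted l m ↔ ∀ t, chS l t ≤ chS m t ∧ chS m t ≤ chS l t + 1 := by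
  constructor
  · rintro ⟨h1, h2⟩ t
    constructor
    · refine Finset.sum_le_sum fun k _ => ?_
      split_ifs with ha hb
      · rfl
      · exact absurd (le_trans ha (h1 k)) hb
      · exact Nat.zero_le _
      · rfl
    · by_contra hc
      push_neg at hc
      set s := chS l t with hs
      have hsm : chS m t ≤ T := chS_le m t
      have hkT : T - s - 2 < T := by omega
      set k : Fin T := ⟨T - s - 2, hkT⟩ with hk
      have htm : t ≤ (m k).1 := by
        refine (le_chS_iff hm k t).2 ?_
        simp only [hk]
        omega
      have hk1 : k.1 + 1 < T := by simp only [hk]; omega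
      have := h2 k hk1
      have htl : t ≤ (l ⟨k.1 + 1, hk1⟩).1 := le_trans htm this
      have := (le_chS_iff hl ⟨k.1 + 1, hk1⟩ t).1 htl
      simp only [hk] at this
      omega
  · intro h
    constructor
    · intro k
      have h1 := (le_chS_iff hl k (l k).1).1 le_rfl
      have h2 := (h (l k).1).1
      exact (le_chS_iff hm k (l k).1).2 (le_trans h1 h2)
    · intro k hk1
      have h1 := (le_chS_iff hm k (m k).1).1 le_rfl
      have h2 := (h (m k).1).2
      refine (le_chS_iff hl ⟨k.1 + 1, hk1⟩ (m k).1).2 ?_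
      simp only
      omega

lemma pairSorted_refl {l : Fin T → Fin d} (hl : Monotone l) : PairSorted l l :=
  ⟨fun _ => le_rfl, fun k hk => hl (by simp only [Fin.mk_le_mk, Fin.le_def]; omega)⟩

section Merge

variable {nn : Fin (2 * T) → Fin d}

lemma oddPart_monotone (h : Monotone nn) : Monotone (oddPart nn) := by
  intro k k' hkk
  exact h (by simp only [Fin.mk_le_mk]; omega)

lemma evenPart_monotone (h : Monotone nn) : Monotone (evenPart nn) := by
  intro k k' hkk
  exact h (by simp only [Fin.mk_le_mk]; omega)

lemma pairSorted_odd_even (h : Monotone nn) : PairSorted (oddPart nn) (evenPart nn) := by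
  constructor
  · intro k; exact h (by simp only [Fin.mk_le_mk]; omega)
  · intro k hk; exact h (by simp only [Fin.mk_le_mk]; omega)

lemma chS_oddPart (h : Monotone nn) (t : ℕ) : chS (oddPart nn) t = chS nn t / 2 := by
  set S := chS nn t with hS
  have hS2 : S ≤ 2 * T := chS_le nn t
  have : ∀ k : Fin T, (if t ≤ (oddPart nn k).1 then 1 else 0)
      = (if T - S / 2 ≤ k.1 then 1 else 0) := by
    intro k
    have hiff := le_chS_iff h ⟨2 * k.1, by have := k.isLt; omega⟩ t
    rw [← hS] at hiff
    have : t ≤ (oddPart nn k).1 ↔ T - S / 2 ≤ k.1 := by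
      rw [show oddPart nn k = nn ⟨2 * k.1, by have := k.isLt; omega⟩ from rfl, hiff]
      simp only
      omega
    exact if_congr this rfl rfl
  rw [chS]
  rw [Finset.sum_congr rfl (fun k _ => this k), cntGe]
  omega

lemma chS_evenPart (h : Monotone nn) (t : ℕ) : chS (evenPart nn) t = (chS nn t + 1) / 2 := by
  set S := chS nn t with hS
  have hS2 : S ≤ 2 * T := chS_le nn t
  have : ∀ k : Fin T, (if t ≤ (evenPart nn k).1 then 1 else 0)
      = (if T - (S + 1) / 2 ≤ k.1 then 1 else 0) := by
    intro k
    have hiff := le_chS_iff h ⟨2 * k.1 + 1, by have := k.isLt; omega⟩ t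
    rw [← hS] at hiff
    have : t ≤ (evenPart nn k).1 ↔ T - (S + 1) / 2 ≤ k.1 := by
      rw [show evenPart nn k = nn ⟨2 * k.1 + 1, by have := k.isLt; omega⟩ from rfl, hiff]
      simp only
      omega
    exact if_congr this rfl rfl
  rw [chS]
  rw [Finset.sum_congr rfl (fun k _ => this k), cntGe]
  omega

end Merge

end SGB
namespace SGB

variable {d T : ℕ}

/-- exponent vector of the monomial `t_{j 1} ⋯ t_{j T}`. -/
noncomputable def vec (j : Fin T → Fin d) : Fin d →₀ ℕ := ∑ k, Finsupp.single (j k) 1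

lemma vec_apply_filter (j : Fin T → Fin d) (V : Finset (Fin d)) :
    ∑ v ∈ V, vec j v = ∑ k : Fin T, if j k ∈ V then 1 else 0 := by
  simp only [vec, Finsupp.finset_sum_apply]
  rw [Finset.sum_comm]
  refine Finset.sum_congr rfl fun k _ => ?_
  simp only [Finsupp.single_apply]
  exact Finset.sum_ite_eq V (j k) (fun _ => 1)

def tailF (f : Fin d →₀ ℕ) (t : ℕ) : ℕ :=
  ∑ v ∈ Finset.univ.filter (fun v : Fin d => t ≤ v.1), f v

lemma tailF_vec (j : Fin T → Fin d) (t : ℕ) : tailF (vec j) t = chS j t := by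
  rw [tailF, vec_apply_filter]
  refine Finset.sum_congr rfl fun k _ => ?_
  simp [Finset.mem_filter]

lemma tailF_add (f g : Fin d →₀ ℕ) (t : ℕ) : tailF (f + g) t = tailF f t + tailF g t := by
  simp [tailF, Finsupp.add_apply, Finset.sum_add_distrib]

lemma tailF_ext {f g : Fin d →₀ ℕ} (h : ∀ t, tailF f t = tailF g t) : f = g := by
  ext v
  have key : ∀ f' : Fin d →₀ ℕ, tailF f' v.1 = f' v + tailF f' (v.1 + 1) := by
    intro f'
    have hins : Finset.univ.filter (fun u : Fin d => v.1 ≤ u.1)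
        = insert v (Finset.univ.filter (fun u : Fin d => v.1 + 1 ≤ u.1)) := by
      ext u
      simp only [Finset.mem_filter, Finset.mem_univ, true_and, Finset.mem_insert]
      constructor
      · intro hu
        rcases eq_or_lt_of_le hu with h1 | h1
        · left; exact Fin.ext h1.symm
        · right; omega
      · rintro (rfl | hu) <;> omega
    rw [tailF, hins, Finset.sum_insert (by simp)]
    rfl
  have h1 := h v.1
  have h2 := h (v.1 + 1)
  rw [key f, key g] at h1
  omega

lemma list_get_sum {α M : Type*} [AddCommMonoid M] (L : List α) (g : α → M) :
    ∑ k : Fin L.length, g (L.get k) = (L.map g).sum := by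
  rw [Fin.sum_univ_def]
  conv_lhs => rw [show (fun k => g (L.get k)) = g ∘ L.get from rfl, ← List.map_map,
    List.map_get_finRange]

lemma merge_exists (l m : Fin T → Fin d) :
    ∃ nn : Fin (2 * T) → Fin d, Monotone nn ∧ vec nn = vec l + vec m := by
  classical
  obtain ⟨L, hLs, hLe⟩ : ∃ L : List (Fin d), L.Pairwise (· ≤ ·) ∧
      (L : Multiset (Fin d)) = Finset.univ.val.map l + Finset.univ.val.map m :=
    ⟨Multiset.sort _ (· ≤ ·), Multiset.pairwise_sort _ _, Multiset.sort_eq _ _⟩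
  have hlen : L.length = 2 * T := by
    have := congrArg Multiset.card hLe
    simp at this
    omega
  refine ⟨fun k => L.get (finCongr hlen.symm k), ?_, ?_⟩
  · intro k k' hk
    exact List.Pairwise.rel_get_of_le hLs hk
  · have e1 : vec (fun k => L.get (finCongr hlen.symm k))
        = ∑ k : Fin L.length, Finsupp.single (L.get k) (1 : ℕ) := by
      rw [vec]
      exact Fintype.sum_equiv (finCongr hlen.symm) _ _ (fun k => rfl)
    rw [e1, list_get_sum L (fun x => Finsupp.single x (1 : ℕ))]
    have e2 : ((L.map (fun x => Finsupp.single x (1 : ℕ))).sum : Fin d →₀ ℕ)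
        = ((L : Multiset (Fin d)).map (fun x => Finsupp.single x (1 : ℕ))).sum := by
      simp
    rw [e2, hLe, Multiset.map_add, Multiset.sum_add]
    congr 1 <;> · rw [vec, Finset.sum]; rw [Multiset.map_map]; rfl

lemma icc_chS (j : Fin T → Fin d) {P Q : Fin d} (hPQ : P ≤ Q) :
    (∑ v ∈ Finset.Icc P Q, vec j v) + chS j (Q.1 + 1) = chS j P.1 := by
  rw [vec_apply_filter, chS, chS, ← Finset.sum_add_distrib]
  refine Finset.sum_congr rfl fun k _ => ?_
  have hPQ' : P.1 ≤ Q.1 := hPQ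
  simp only [Finset.mem_Icc, Fin.le_def]
  split_ifs <;> omega

lemma expDeg_vec (j : Fin T → Fin d) : expDeg (vec j) = T := by
  rw [expDeg, Finsupp.sum_fintype _ _ (fun _ => rfl)]
  have := vec_apply_filter j Finset.univ
  simp only [Finset.mem_univ, if_true] at this
  simpa using this

end SGB
namespace SGB

variable {d T : ℕ}

lemma chS_sum_of_vec_eq {l m : Fin T → Fin d} {nn : Fin (2 * T) → Fin d}
    (hsum : vec nn = vec l + vec m) (t : ℕ) : chS nn t = chS l t + chS m t := by
  have := congrArg (fun f => tailF f t) hsum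
  simpa [tailF_add, tailF_vec] using this

lemma closure {n : ℕ} {b c : Fin n → ℕ} {p q : Fin n → Fin d}
    (hpq : ∀ i, p i ≤ q i) {l m : Fin T → Fin d} {nn : Fin (2 * T) → Fin d}
    (hnn : Monotone nn) (hsum : vec nn = vec l + vec m)
    (hlm : vec l ∈ SVConfig d T n b c p q) (hmm : vec m ∈ SVConfig d T n b c p q) :
    vec (oddPart nn) ∈ SVConfig d T n b c p q ∧
    vec (evenPart nn) ∈ SVConfig d T n b c p q := by
  have hS := chS_sum_of_vec_eq hsum
  obtain ⟨-, hl2⟩ := hlm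
  obtain ⟨-, hm2⟩ := hmm
  constructor
  · refine ⟨expDeg_vec _, fun i => ?_⟩
    obtain ⟨hc1, hc2⟩ := hl2 i
    obtain ⟨hd1, hd2⟩ := hm2 i
    have el := icc_chS l (hpq i)
    have em := icc_chS m (hpq i)
    have eo := icc_chS (oddPart nn) (hpq i)
    have h1 := chS_oddPart hnn (p i).1
    have h2 := chS_oddPart hnn ((q i).1 + 1)
    have h3 := hS (p i).1
    have h4 := hS ((q i).1 + 1)
    constructor <;> omega
  · refine ⟨expDeg_vec _, fun i => ?_⟩
    obtain ⟨hc1, hc2⟩ := hl2 i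
    obtain ⟨hd1, hd2⟩ := hm2 i
    have el := icc_chS l (hpq i)
    have em := icc_chS m (hpq i)
    have eo := icc_chS (evenPart nn) (hpq i)
    have h1 := chS_evenPart hnn (p i).1
    have h2 := chS_evenPart hnn ((q i).1 + 1)
    have h3 := hS (p i).1
    have h4 := hS ((q i).1 + 1)
    constructor <;> omega

/-! ### The weight function -/

def Pw (j : Fin T → Fin d) : ℕ := ∑ t ∈ Finset.range d, (chS j t) ^ 2
def Dw (j : Fin T → Fin d) : ℕ := ∑ t ∈ Finset.range d, chS j t
def wRaw (j : Fin T → Fin d) : ℕ :=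
  (2 * (d * T) ^ 2 + 1) * Pw j + ((d * T) ^ 2 - (Dw j) ^ 2)

lemma bal_sq (a b : ℕ) :
    ((a + b) / 2) ^ 2 + ((a + b + 1) / 2) ^ 2 ≤ a ^ 2 + b ^ 2 ∧
    (((a + b) / 2) ^ 2 + ((a + b + 1) / 2) ^ 2 = a ^ 2 + b ^ 2 →
      (a = (a + b) / 2 ∧ b = (a + b + 1) / 2) ∨ (a = (a + b + 1) / 2 ∧ b = (a + b) / 2)) := by
  set c := (a + b) / 2 with hc
  set e := (a + b + 1) / 2 with he
  have hce : c + e = a + b := by omega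
  rcases le_total a b with hab | hab
  · have h1 : a ≤ c := by omega
    have h2 : c ≤ b := by omega
    have hE : (e : ℤ) = (a : ℤ) + b - c := by
      have : (c : ℤ) + e = (a : ℤ) + b := by exact_mod_cast hce
      linarith
    have key : (a : ℤ) ^ 2 + (b : ℤ) ^ 2 - (c : ℤ) ^ 2 - (e : ℤ) ^ 2
        = 2 * ((c : ℤ) - a) * ((b : ℤ) - c) := by rw [hE]; ring
    have hnn : (0 : ℤ) ≤ 2 * ((c : ℤ) - a) * ((b : ℤ) - c) := by
      apply mul_nonneg
      · apply mul_nonneg <;> [norm_num; skip]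
        simp only [sub_nonneg]
        exact_mod_cast h1
      · simp only [sub_nonneg]
        exact_mod_cast h2
    constructor
    · have : (c : ℤ) ^ 2 + (e : ℤ) ^ 2 ≤ (a : ℤ) ^ 2 + (b : ℤ) ^ 2 := by linarith
      exact_mod_cast this
    · intro heq
      have heq' : (c : ℤ) ^ 2 + (e : ℤ) ^ 2 = (a : ℤ) ^ 2 + (b : ℤ) ^ 2 := by exact_mod_cast heq
      have h0 : 2 * ((c : ℤ) - a) * ((b : ℤ) - c) = 0 := by linarith
      rcases mul_eq_zero.1 h0 with h0 | h0
      · have : (c : ℤ) = a := by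
          rcases mul_eq_zero.1 h0 with h0 | h0
          · norm_num at h0
          · linarith
        have : c = a := by exact_mod_cast this
        left; omega
      · have : (b : ℤ) = c := by linarith
        have : b = c := by exact_mod_cast this
        left; omega
  · have h1 : b ≤ c := by omega
    have h2 : c ≤ a := by omega
    have hE : (e : ℤ) = (a : ℤ) + b - c := by
      have : (c : ℤ) + e = (a : ℤ) + b := by exact_mod_cast hce
      linarith
    have key : (a : ℤ) ^ 2 + (b : ℤ) ^ 2 - (c : ℤ) ^ 2 - (e : ℤ) ^ 2
        = 2 * ((c : ℤ) - b) * ((a : ℤ) - c) := by rw [hE]; ring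
    have hnn : (0 : ℤ) ≤ 2 * ((c : ℤ) - b) * ((a : ℤ) - c) := by
      apply mul_nonneg
      · apply mul_nonneg <;> [norm_num; skip]
        simp only [sub_nonneg]
        exact_mod_cast h1
      · simp only [sub_nonneg]
        exact_mod_cast h2
    constructor
    · have : (c : ℤ) ^ 2 + (e : ℤ) ^ 2 ≤ (a : ℤ) ^ 2 + (b : ℤ) ^ 2 := by linarith
      exact_mod_cast this
    · intro heq
      have heq' : (c : ℤ) ^ 2 + (e : ℤ) ^ 2 = (a : ℤ) ^ 2 + (b : ℤ) ^ 2 := by exact_mod_cast heq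
      have h0 : 2 * ((c : ℤ) - b) * ((a : ℤ) - c) = 0 := by linarith
      rcases mul_eq_zero.1 h0 with h0 | h0
      · have : (c : ℤ) = b := by
          rcases mul_eq_zero.1 h0 with h0 | h0
          · norm_num at h0
          · linarith
        have : c = b := by exact_mod_cast this
        right; omega
      · have : (a : ℤ) = c := by linarith
        have : a = c := by exact_mod_cast this
        right; omega

lemma spread_sq (p q a b : ℕ) (h1 : p ≤ a) (h2 : a ≤ q) (hsum : a + b = p + q) :
    a ^ 2 + b ^ 2 ≤ p ^ 2 + q ^ 2 ∧ (a ^ 2 + b ^ 2 = p ^ 2 + q ^ 2 → a = p ∨ a = q) := by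
  have hB : (b : ℤ) = (p : ℤ) + q - a := by
    have : (a : ℤ) + b = (p : ℤ) + q := by exact_mod_cast hsum
    linarith
  have key : (p : ℤ) ^ 2 + (q : ℤ) ^ 2 - (a : ℤ) ^ 2 - (b : ℤ) ^ 2
      = 2 * ((a : ℤ) - p) * ((q : ℤ) - a) := by rw [hB]; ring
  have hnn : (0 : ℤ) ≤ 2 * ((a : ℤ) - p) * ((q : ℤ) - a) := by
    apply mul_nonneg
    · apply mul_nonneg <;> [norm_num; skip]
      simp only [sub_nonneg]
      exact_mod_cast h1
    · simp only [sub_nonneg]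
      exact_mod_cast h2
  constructor
  · have : (a : ℤ) ^ 2 + (b : ℤ) ^ 2 ≤ (p : ℤ) ^ 2 + (q : ℤ) ^ 2 := by linarith
    exact_mod_cast this
  · intro heq
    have heq' : (a : ℤ) ^ 2 + (b : ℤ) ^ 2 = (p : ℤ) ^ 2 + (q : ℤ) ^ 2 := by exact_mod_cast heq
    have h0 : 2 * ((a : ℤ) - p) * ((q : ℤ) - a) = 0 := by linarith
    rcases mul_eq_zero.1 h0 with h0 | h0
    · rcases mul_eq_zero.1 h0 with h0 | h0
      · norm_num at h0
      · left
        have : (a : ℤ) = p := by linarith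
        exact_mod_cast this
    · right
      have : (a : ℤ) = q := by linarith
      exact_mod_cast this

lemma Dw_le (j : Fin T → Fin d) : Dw j ≤ d * T := by
  calc Dw j ≤ ∑ _t ∈ Finset.range d, T := Finset.sum_le_sum fun t _ => chS_le j t
  _ = d * T := by simp [mul_comm]

lemma wkey {l m : Fin T → Fin d} {nn : Fin (2 * T) → Fin d}
    (hl : Monotone l) (hm : Monotone m) (hnn : Monotone nn)
    (hsum : vec nn = vec l + vec m)
    (hne1 : ¬(l = oddPart nn ∧ m = evenPart nn))
    (hne2 : ¬(l = evenPart nn ∧ m = oddPart nn)) :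
    wRaw (oddPart nn) + wRaw (evenPart nn) < wRaw l + wRaw m := by
  have hS := chS_sum_of_vec_eq hsum
  have hu : ∀ t, chS (oddPart nn) t = (chS l t + chS m t) / 2 := fun t => by
    rw [chS_oddPart hnn, hS]
  have hv : ∀ t, chS (evenPart nn) t = (chS l t + chS m t + 1) / 2 := fun t => by
    rw [chS_evenPart hnn, hS]
  have hPt : ∀ t ∈ Finset.range d,
      (chS (oddPart nn) t) ^ 2 + (chS (evenPart nn) t) ^ 2
        ≤ (chS l t) ^ 2 + (chS m t) ^ 2 := fun t _ => by
    rw [hu, hv]; exact (bal_sq _ _).1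
  have hPsum : Pw (oddPart nn) + Pw (evenPart nn) ≤ Pw l + Pw m := by
    rw [Pw, Pw, Pw, Pw, ← Finset.sum_add_distrib, ← Finset.sum_add_distrib]
    exact Finset.sum_le_sum hPt
  have hD2 : ∀ j : Fin T → Fin d, (Dw j) ^ 2 ≤ (d * T) ^ 2 := fun j =>
    Nat.pow_le_pow_left (Dw_le j) 2
  set M : ℕ := 2 * (d * T) ^ 2 + 1 with hM
  set C : ℕ := (d * T) ^ 2 with hC
  rcases eq_or_lt_of_le hPsum with hEq | hLt
  · -- primary tie
    have hptEq : ∀ t ∈ Finset.range d,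
        (chS (oddPart nn) t) ^ 2 + (chS (evenPart nn) t) ^ 2
          = (chS l t) ^ 2 + (chS m t) ^ 2 := by
      have := (Finset.sum_eq_sum_iff_of_le hPt).1 (by
        rw [Pw, Pw, Pw, Pw, ← Finset.sum_add_distrib, ← Finset.sum_add_distrib] at hEq
        exact hEq)
      exact this
    have hdisj : ∀ t ∈ Finset.range d,
        (chS l t = chS (oddPart nn) t ∧ chS m t = chS (evenPart nn) t) ∨
        (chS l t = chS (evenPart nn) t ∧ chS m t = chS (oddPart nn) t) := by
      intro t ht
      have := (bal_sq (chS l t) (chS m t)).2 (by rw [← hu, ← hv]; exact hptEq t ht)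
      rw [← hu, ← hv] at this
      tauto
    have hDl1 : Dw (oddPart nn) ≤ Dw l := by
      refine Finset.sum_le_sum fun t ht => ?_
      rcases hdisj t ht with ⟨h1, _⟩ | ⟨h1, _⟩ <;> (have := hu t; have := hv t; omega)
    have hDl2 : Dw l ≤ Dw (evenPart nn) := by
      refine Finset.sum_le_sum fun t ht => ?_
      rcases hdisj t ht with ⟨h1, _⟩ | ⟨h1, _⟩ <;> (have := hu t; have := hv t; omega)
    have hDsum : Dw l + Dw m = Dw (oddPart nn) + Dw (evenPart nn) := by
      rw [Dw, Dw, Dw, Dw, ← Finset.sum_add_distrib, ← Finset.sum_add_distrib]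
      refine Finset.sum_congr rfl fun t _ => ?_
      have := hu t; have := hv t; omega
    obtain ⟨hsp1, hsp2⟩ := spread_sq (Dw (oddPart nn)) (Dw (evenPart nn)) (Dw l) (Dw m)
      hDl1 hDl2 hDsum
    rcases eq_or_lt_of_le hsp1 with hDEq | hDLt
    · -- secondary tie: contradiction
      exfalso
      rcases hsp2 hDEq with hcase | hcase
      · -- Dw l = Dw (oddPart nn) : l = oddPart, m = evenPart
        have hallu : ∀ t ∈ Finset.range d, chS (oddPart nn) t = chS l t := by
          refine (Finset.sum_eq_sum_iff_of_le ?_).1 hcase.symm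
          intro t ht
          rcases hdisj t ht with ⟨h1, _⟩ | ⟨h1, _⟩ <;> (have := hu t; have := hv t; omega)
        have hlu : l = oddPart nn := by
          refine chain_ext hl (oddPart_monotone hnn) fun t => ?_
          by_cases htd : t < d
          · exact (hallu t (Finset.mem_range.2 htd)).symm
          · rw [chS_zero_of_ge _ (by omega), chS_zero_of_ge _ (by omega)]
        have hmv : m = evenPart nn := by
          refine chain_ext hm (evenPart_monotone hnn) fun t => ?_
          by_cases htd : t < d
          · have h1 := hallu t (Finset.mem_range.2 htd)
            rcases hdisj t (Finset.mem_range.2 htd) with ⟨h2, h3⟩ | ⟨h2, h3⟩ <;>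
              (have := hu t; have := hv t; omega)
          · rw [chS_zero_of_ge _ (by omega), chS_zero_of_ge _ (by omega)]
        exact hne1 ⟨hlu, hmv⟩
      · -- Dw l = Dw (evenPart nn) : l = evenPart, m = oddPart
        have hallv : ∀ t ∈ Finset.range d, chS l t = chS (evenPart nn) t := by
          refine (Finset.sum_eq_sum_iff_of_le ?_).1 hcase
          intro t ht
          rcases hdisj t ht with ⟨h1, _⟩ | ⟨h1, _⟩ <;> (have := hu t; have := hv t; omega)
        have hlv : l = evenPart nn := by
          refine chain_ext hl (evenPart_monotone hnn) fun t => ?_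
          by_cases htd : t < d
          · exact hallv t (Finset.mem_range.2 htd)
          · rw [chS_zero_of_ge _ (by omega), chS_zero_of_ge _ (by omega)]
        have hmu : m = oddPart nn := by
          refine chain_ext hm (oddPart_monotone hnn) fun t => ?_
          by_cases htd : t < d
          · have h1 := hallv t (Finset.mem_range.2 htd)
            rcases hdisj t (Finset.mem_range.2 htd) with ⟨h2, h3⟩ | ⟨h2, h3⟩ <;>
              (have := hu t; have := hv t; omega)
          · rw [chS_zero_of_ge _ (by omega), chS_zero_of_ge _ (by omega)]
        exact hne2 ⟨hlv, hmu⟩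
    · -- secondary strict
      have hMP : M * Pw (oddPart nn) + M * Pw (evenPart nn) = M * Pw l + M * Pw m := by
        rw [← mul_add, ← mul_add, hEq]
      have b1 := hD2 l; have b2 := hD2 m; have b3 := hD2 (oddPart nn)
      have b4 := hD2 (evenPart nn)
      simp only [wRaw, ← hM, ← hC]
      set X1 := M * Pw (oddPart nn)
      set X2 := M * Pw (evenPart nn)
      set X3 := M * Pw l
      set X4 := M * Pw m
      set Y1 := (Dw (oddPart nn)) ^ 2
      set Y2 := (Dw (evenPart nn)) ^ 2
      set Y3 := (Dw l) ^ 2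
      set Y4 := (Dw m) ^ 2
      omega
  · -- primary strict
    have hMle : M * Pw (oddPart nn) + M * Pw (evenPart nn) + M ≤ M * Pw l + M * Pw m := by
      have := Nat.mul_le_mul_left M (show Pw (oddPart nn) + Pw (evenPart nn) + 1
        ≤ Pw l + Pw m from hLt)
      rw [mul_add, mul_add, mul_one] at this
      linarith
    have b1 := hD2 l; have b2 := hD2 m; have b3 := hD2 (oddPart nn)
    have b4 := hD2 (evenPart nn)
    simp only [wRaw, ← hM, ← hC]
    set X1 := M * Pw (oddPart nn)
    set X2 := M * Pw (evenPart nn)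
    set X3 := M * Pw l
    set X4 := M * Pw m
    set Y1 := (Dw (oddPart nn)) ^ 2
    set Y2 := (Dw (evenPart nn)) ^ 2
    set Y3 := (Dw l) ^ 2
    set Y4 := (Dw m) ^ 2
    have hMC : M = 2 * C + 1 := rfl
    omega
end SGB
namespace SGB

section Order

variable {σ : Type*}

noncomputable def Wt (w : σ → ℕ) (a : σ →₀ ℕ) : ℕ := a.sum fun j e => e * w j

lemma Wt_add (w : σ → ℕ) (a b : σ →₀ ℕ) : Wt w (a + b) = Wt w a + Wt w b :=
  Finsupp.sum_add_index' (fun _ => zero_mul _) (fun j e1 e2 => add_mul e1 e2 (w j))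

lemma Wt_zero (w : σ → ℕ) : Wt w 0 = 0 := Finsupp.sum_zero_index

lemma Wt_single (w : σ → ℕ) (j : σ) (k : ℕ) : Wt w (Finsupp.single j k) = k * w j :=
  Finsupp.sum_single_index (zero_mul _)

variable [LinearOrder σ]

/-- weight order with lex tie-break. -/
def rord (w : σ → ℕ) (a b : σ →₀ ℕ) : Prop :=
  Wt w a < Wt w b ∨ (Wt w a = Wt w b ∧ toLex a ≤ toLex b)

lemma rord_refl (w : σ → ℕ) (a : σ →₀ ℕ) : rord w a a := Or.inr ⟨rfl, le_refl _⟩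

lemma rord_wt_le {w : σ → ℕ} {a b : σ →₀ ℕ} (h : rord w a b) : Wt w a ≤ Wt w b := by
  rcases h with h | ⟨h, -⟩ <;> omega

lemma rord_isMonomialOrder (w : σ → ℕ) : IsMonomialOrder (rord w) := by
  letI hr : IsRefl (σ →₀ ℕ) (rord w) := ⟨rord_refl w⟩
  letI ht : IsTrans (σ →₀ ℕ) (rord w) := ⟨by
    rintro a b c (h | ⟨h1, h2⟩) (h' | ⟨h1', h2'⟩)
    · exact Or.inl (lt_trans h h')
    · exact Or.inl (by omega)
    · exact Or.inl (by omega)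
    · exact Or.inr ⟨h1.trans h1', le_trans h2 h2'⟩⟩
  letI han : IsAntisymm (σ →₀ ℕ) (rord w) := ⟨by
    rintro a b (h | ⟨h1, h2⟩) (h' | ⟨h1', h2'⟩)
    · omega
    · omega
    · omega
    · exact toLex_inj.1 (le_antisymm h2 h2')⟩
  letI hto : IsTotal (σ →₀ ℕ) (rord w) := ⟨by
    intro a b
    rcases lt_trichotomy (Wt w a) (Wt w b) with h | h | h
    · exact Or.inl (Or.inl h)
    · rcases le_total (toLex a) (toLex b) with h2 | h2
      · exact Or.inl (Or.inr ⟨h, h2⟩)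
      · exact Or.inr (Or.inr ⟨h.symm, h2⟩)
    · exact Or.inr (Or.inl h)⟩
  refine ⟨{}, ?_, ?_⟩
  · intro a
    rcases Nat.eq_zero_or_pos (Wt w a) with h | h
    · exact Or.inr ⟨by rw [Wt_zero, h], Finsupp.toLex_monotone (zero_le : (0 : σ →₀ ℕ) ≤ a)⟩
    · exact Or.inl (by rw [Wt_zero]; exact h)
  · rintro a b cc (h | ⟨h1, h2⟩)
    · exact Or.inl (by rw [Wt_add, Wt_add]; omega)
    · refine Or.inr ⟨by rw [Wt_add, Wt_add, h1], ?_⟩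
      rw [toLex_add, toLex_add]
      exact add_le_add_left h2 (toLex cc)

end Order

section Hom

variable {K : Type*} [Field K] {σ X : Type*}

/-- the exponent map induced by `v` on products of variables. -/
noncomputable def Am (v : σ → (X →₀ ℕ)) (a : σ →₀ ℕ) : X →₀ ℕ := a.sum fun s e => e • v s

lemma Am_add (v : σ → (X →₀ ℕ)) (a b : σ →₀ ℕ) : Am v (a + b) = Am v a + Am v b :=
  Finsupp.sum_add_index' (fun s => zero_smul ℕ (v s)) (fun s e1 e2 => add_smul e1 e2 (v s))

lemma Am_single (v : σ → (X →₀ ℕ)) (s : σ) (k : ℕ) : Am v (Finsupp.single s k) = k • v s :=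
  Finsupp.sum_single_index (zero_smul ℕ (v s))

lemma Am_zero (v : σ → (X →₀ ℕ)) : Am v 0 = 0 := Finsupp.sum_zero_index

lemma monomial_prod {ι : Type*} (s : Finset ι) (g : ι → (X →₀ ℕ)) :
    ∏ i ∈ s, MvPolynomial.monomial (g i) (1 : K) = MvPolynomial.monomial (∑ i ∈ s, g i) 1 := by
  classical
  induction s using Finset.induction_on with
  | empty => simp
  | insert x t hx ih =>
    rw [Finset.prod_insert hx, Finset.sum_insert hx, ih, MvPolynomial.monomial_mul, one_mul]

lemma toricHom_monomial (v : σ → (X →₀ ℕ)) (a : σ →₀ ℕ) (k : K) :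
    toricHom K v (MvPolynomial.monomial a k) = MvPolynomial.monomial (Am v a) k := by
  rw [toricHom, MvPolynomial.aeval_monomial]
  have h1 : (a.prod fun s e => (MvPolynomial.monomial (v s) (1 : K)) ^ e)
      = MvPolynomial.monomial (Am v a) (1 : K) := by
    rw [Finsupp.prod]
    have : ∀ s ∈ a.support, (MvPolynomial.monomial (v s) (1 : K)) ^ (a s)
        = MvPolynomial.monomial ((a s) • v s) 1 := fun s _ => by
      rw [MvPolynomial.monomial_pow, one_pow]
    rw [Finset.prod_congr rfl this, monomial_prod]
    rfl
  rw [h1, MvPolynomial.algebraMap_eq, MvPolynomial.C_mul_monomial, mul_one]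

lemma toricHom_X (v : σ → (X →₀ ℕ)) (s : σ) :
    toricHom K v (MvPolynomial.X s) = MvPolynomial.monomial (v s) 1 := by
  rw [toricHom, MvPolynomial.aeval_X]

lemma coeff_toricHom [DecidableEq X] (v : σ → (X →₀ ℕ)) (f : MvPolynomial σ K) (μ : X →₀ ℕ) :
    MvPolynomial.coeff μ (toricHom K v f)
      = ∑ a ∈ f.support, if Am v a = μ then MvPolynomial.coeff a f else 0 := by
  conv_lhs => rw [f.as_sum, map_sum]
  rw [MvPolynomial.coeff_sum]
  refine Finset.sum_congr rfl fun a _ => ?_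
  rw [toricHom_monomial, MvPolynomial.coeff_monomial]

lemma ker_fiber [DecidableEq X] {v : σ → (X →₀ ℕ)} {f : MvPolynomial σ K} (hf : toricHom K v f = 0)
    {a0 : σ →₀ ℕ} (ha : a0 ∈ f.support) :
    ∃ a', a' ∈ f.support ∧ a' ≠ a0 ∧ Am v a' = Am v a0 := by
  classical
  by_contra hcon
  push_neg at hcon
  have h0 := congrArg (MvPolynomial.coeff (Am v a0)) hf
  rw [coeff_toricHom, MvPolynomial.coeff_zero] at h0
  rw [Finset.sum_eq_single a0 (fun a ha' hne => if_neg (hcon a ha' hne)) (fun h => absurd ha h),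
    if_pos rfl] at h0
  exact (MvPolynomial.mem_support_iff.1 ha) h0

end Hom

end SGB
namespace SGB

section SmallLemmas

variable {σ : Type*}

lemma expDeg_add (a b : σ →₀ ℕ) : expDeg (a + b) = expDeg a + expDeg b :=
  Finsupp.sum_add_index' (fun _ => rfl) (fun _ _ _ => rfl)

lemma expDeg_zero : expDeg (0 : σ →₀ ℕ) = 0 := Finsupp.sum_zero_index

lemma expDeg_single (j : σ) (k : ℕ) : expDeg (Finsupp.single j k) = k :=
  Finsupp.sum_single_index rfl

lemma expDeg_eq_zero {a : σ →₀ ℕ} (h : expDeg a = 0) : a = 0 := by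
  classical
  rw [expDeg, Finsupp.sum] at h
  ext j
  by_cases hj : j ∈ a.support
  · exact (Finset.sum_eq_zero_iff.1 h j hj)
  · simpa using Finsupp.notMem_support_iff.1 hj

lemma expDeg_smul (k : ℕ) (f : σ →₀ ℕ) : expDeg (k • f) = k * expDeg f := by
  induction k with
  | zero => rw [zero_smul, expDeg_zero, zero_mul]
  | succ k ih => rw [succ_nsmul, expDeg_add, ih]; ring

lemma eq_of_le_of_expDeg_eq {m' m : σ →₀ ℕ} (h : m' ≤ m) (he : expDeg m' = expDeg m) :
    m' = m := by
  obtain ⟨k, rfl⟩ := le_iff_exists_add.1 h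
  rw [expDeg_add] at he
  have : expDeg k = 0 := by omega
  rw [expDeg_eq_zero this, add_zero]

lemma single_pair_eq {j j' u v : σ}
    (h : Finsupp.single j (1 : ℕ) + Finsupp.single j' 1
        = Finsupp.single u 1 + Finsupp.single v 1) :
    (j = u ∧ j' = v) ∨ (j = v ∧ j' = u) := by
  classical
  by_cases hju : j = u
  · subst hju
    left
    refine ⟨rfl, ?_⟩
    have := add_left_cancel h
    exact (Finsupp.single_left_inj one_ne_zero).1 this
  · have h1 := congrArg (fun f => f j) h
    simp only [Finsupp.add_apply, Finsupp.single_apply, if_pos rfl] at h1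
    have hvj : v = j := by
      by_contra hvj
      rw [if_neg (fun hh : u = j => hju hh.symm), if_neg hvj] at h1
      split_ifs at h1 <;> omega
    right
    refine ⟨hvj.symm, ?_⟩
    rw [show Finsupp.single u (1:ℕ) + Finsupp.single v 1
        = Finsupp.single v 1 + Finsupp.single u 1 from add_comm _ _, ← hvj] at h
    have := add_left_cancel (hvj ▸ h)
    exact (Finsupp.single_left_inj one_ne_zero).1 this

end SmallLemmas

section Binomial

variable {σ K : Type*} [Field K]

lemma support_binomial [DecidableEq (σ →₀ ℕ)] {e e' : σ →₀ ℕ} (h : e ≠ e') :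
    (MvPolynomial.monomial e (1 : K) - MvPolynomial.monomial e' 1).support = {e, e'} := by
  classical
  ext x
  simp only [MvPolynomial.mem_support_iff, MvPolynomial.coeff_sub,
    MvPolynomial.coeff_monomial, Finset.mem_insert, Finset.mem_singleton]
  split_ifs with h1 h2 h3
  · exact absurd (h1.trans h2.symm) h
  · simp only [sub_zero, ne_eq, one_ne_zero, not_false_iff, true_iff]
    left; exact h1.symm
  · simp only [zero_sub, ne_eq, neg_eq_zero, one_ne_zero, not_false_iff, true_iff]
    right; exact h3.symm
  · simp only [sub_self, ne_eq, not_true_eq_false, false_iff, not_or]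
    exact ⟨fun hh => h1 hh.symm, fun hh => h3 hh.symm⟩

lemma coeff_binomial {e e' : σ →₀ ℕ} (h : e ≠ e') :
    MvPolynomial.coeff e (MvPolynomial.monomial e (1 : K) - MvPolynomial.monomial e' 1) = 1 := by
  classical
  rw [MvPolynomial.coeff_sub, MvPolynomial.coeff_monomial, MvPolynomial.coeff_monomial,
    if_pos rfl, if_neg (fun hh => h hh.symm), sub_zero]

end Binomial

section SV

variable {d T n : ℕ} {b c : Fin n → ℕ} {p q : Fin n → Fin d}

/-- the exponent vectors attached to the variables. -/
noncomputable def vmap (d T n : ℕ) (b c : Fin n → ℕ) (p q : Fin n → Fin d) :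
    SVIdx d T n b c p q → (Fin d →₀ ℕ) := fun j => vec j.1

/-- a monomial in `K[X]` is sorted if its variables are pairwise sorted. -/
def SortedM (a : SVIdx d T n b c p q →₀ ℕ) : Prop :=
  ∀ j ∈ a.support, ∀ j' ∈ a.support, PairSorted j.1 j'.1 ∨ PairSorted j'.1 j.1

lemma sortedM_subset {a a2 : SVIdx d T n b c p q →₀ ℕ} (hsub : a2.support ⊆ a.support)
    (hs : SortedM a) : SortedM a2 := fun j hj j' hj' => hs j (hsub hj) j' (hsub hj')

lemma vec_odd_even {nn : Fin (2 * T) → Fin d} (hmon : Monotone nn) :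
    vec (oddPart nn) + vec (evenPart nn) = vec nn := by
  refine tailF_ext fun t => ?_
  rw [tailF_add, tailF_vec, tailF_vec, tailF_vec, chS_oddPart hmon, chS_evenPart hmon]
  have := chS_le nn t
  omega

lemma expDeg_Am (hT : 1 ≤ T) (a : SVIdx d T n b c p q →₀ ℕ) :
    expDeg (Am (vmap d T n b c p q) a) = T * expDeg a := by
  classical
  induction a using Finsupp.induction with
  | zero => rw [Am_zero, expDeg_zero, expDeg_zero, mul_zero]
  | single_add j k f hj hk ih =>
    rw [Am_add, expDeg_add, expDeg_add, Am_single, expDeg_single, expDeg_smul, ih,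
      vmap, expDeg_vec]
    ring

lemma tailF_Am (a : SVIdx d T n b c p q →₀ ℕ) (t : ℕ) :
    tailF (Am (vmap d T n b c p q) a) t = a.sum fun j e => e * chS j.1 t := by
  classical
  rw [Am, tailF, Finsupp.sum, Finsupp.sum]
  rw [show (∑ v ∈ Finset.univ.filter (fun v : Fin d => t ≤ v.1),
      (∑ j ∈ a.support, a j • vmap d T n b c p q j) v)
      = ∑ v ∈ Finset.univ.filter (fun v : Fin d => t ≤ v.1),
        ∑ j ∈ a.support, (a j • vmap d T n b c p q j) v from
    Finset.sum_congr rfl fun v _ => Finsupp.finset_sum_apply _ _ _]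
  rw [Finset.sum_comm]
  refine Finset.sum_congr rfl fun j _ => ?_
  simp only [Finsupp.smul_apply, smul_eq_mul]
  rw [← Finset.mul_sum]
  congr 1
  exact tailF_vec j.1 t

lemma exists_top {a : SVIdx d T n b c p q →₀ ℕ} (ha : a ≠ 0) (hs : SortedM a) :
    ∃ jm ∈ a.support, ∀ j ∈ a.support, ∀ t, chS j.1 t ≤ chS jm.1 t := by
  classical
  obtain ⟨jm, hjm, hmax⟩ := Finset.exists_max_image a.support (fun j => Dw j.1)
    (Finsupp.support_nonempty_iff.2 ha)
  refine ⟨jm, hjm, fun j hj t => ?_⟩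
  rcases hs j hj jm hjm with hps | hps
  · exact ((pairSorted_iff j.2.1 jm.2.1).1 hps t).1
  · -- jm ≤ j pointwise; with Dw j ≤ Dw jm get equality
    have hle : ∀ t', chS jm.1 t' ≤ chS j.1 t' := fun t' =>
      ((pairSorted_iff jm.2.1 j.2.1).1 hps t').1
    have hDle : Dw jm.1 ≤ Dw j.1 := Finset.sum_le_sum fun t' _ => hle t'
    have hDeq : Dw jm.1 = Dw j.1 := le_antisymm hDle (hmax j hj)
    have := (Finset.sum_eq_sum_iff_of_le (fun t' _ => hle t')).1 hDeq
    by_cases htd : t < d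
    · exact (this t (Finset.mem_range.2 htd)).ge
    · rw [chS_zero_of_ge _ (by omega), chS_zero_of_ge _ (by omega)]

lemma top_profile {a : SVIdx d T n b c p q →₀ ℕ} {jm : SVIdx d T n b c p q}
    (hmem : jm ∈ a.support)
    (htop : ∀ j ∈ a.support, ∀ t, chS j.1 t ≤ chS jm.1 t)
    (hsort : SortedM a) (t : ℕ) :
    expDeg a * chS jm.1 t ≤ tailF (Am (vmap d T n b c p q) a) t + (expDeg a - 1) ∧
    tailF (Am (vmap d T n b c p q) a) t ≤ expDeg a * chS jm.1 t := by
  classical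
  rw [tailF_Am, Finsupp.sum]
  have hE : expDeg a = ∑ j ∈ a.support, a j := rfl
  rw [hE]
  set S := chS jm.1 t with hSdef
  have hupper : ∑ j ∈ a.support, a j * chS j.1 t ≤ (∑ j ∈ a.support, a j) * S := by
    rw [Finset.sum_mul]
    exact Finset.sum_le_sum fun j hj => Nat.mul_le_mul_left _ (htop j hj t)
  have hdecomp := Finset.add_sum_erase a.support (fun j => a j * chS j.1 t) hmem
  have hdecompE := Finset.add_sum_erase a.support (fun j => a j) hmem
  have hlow : ∀ j ∈ a.support, S ≤ chS j.1 t + 1 := by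
    intro j hj
    rcases hsort j hj jm hmem with hps | hps
    · exact ((pairSorted_iff j.2.1 jm.2.1).1 hps t).2
    · exact le_trans ((pairSorted_iff jm.2.1 j.2.1).1 hps t).1 (by omega)
  have hrest : (∑ j ∈ a.support.erase jm, a j) * S
      ≤ (∑ j ∈ a.support.erase jm, a j * chS j.1 t) + ∑ j ∈ a.support.erase jm, a j := by
    rw [Finset.sum_mul, ← Finset.sum_add_distrib]
    refine Finset.sum_le_sum fun j hj => ?_
    have := hlow j (Finset.mem_of_mem_erase hj)
    calc a j * S ≤ a j * (chS j.1 t + 1) := Nat.mul_le_mul_left _ this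
    _ = a j * chS j.1 t + a j := by ring
  have hA : 1 ≤ a jm := Finsupp.mem_support_iff.1 hmem |> Nat.one_le_iff_ne_zero.2
  set A := a jm with hAdef
  set R := ∑ j ∈ a.support.erase jm, a j with hR
  set TR := ∑ j ∈ a.support.erase jm, a j * chS j.1 t with hTR
  have hmul1 : (A + R) * S = A * S + R * S := add_mul A R S
  have hmul2 : A * S + TR = ∑ j ∈ a.support, a j * chS j.1 t := hdecomp
  have hsumE : A + R = ∑ j ∈ a.support, a j := hdecompE
  set X := A * S
  set Y := R * S
  set TT := ∑ j ∈ a.support, a j * chS j.1 t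
  set E := ∑ j ∈ a.support, a j
  have hupper' : TT ≤ E * S := hupper
  have hmul3 : E * S = X + Y := by rw [← hsumE]; exact hmul1
  omega

lemma sorted_unique (hT : 1 ≤ T) :
    ∀ (N : ℕ) (a a' : SVIdx d T n b c p q →₀ ℕ), expDeg a = N → SortedM a → SortedM a' →
      Am (vmap d T n b c p q) a = Am (vmap d T n b c p q) a' → a = a' := by
  classical
  intro N
  induction N with
  | zero =>
    intro a a' hdeg _ _ hAm
    have ha : a = 0 := expDeg_eq_zero hdeg
    subst ha
    have : T * expDeg a' = 0 := by
      rw [← expDeg_Am hT, ← hAm, Am_zero, expDeg_zero]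
    have : expDeg a' = 0 := by
      rcases Nat.mul_eq_zero.1 this with h | h
      · omega
      · exact h
    exact (expDeg_eq_zero this).symm
  | succ N ih =>
    intro a a' hdeg hs hs' hAm
    have hdeg' : expDeg a' = N + 1 := by
      have h1 : T * expDeg a = T * expDeg a' := by
        rw [← expDeg_Am hT, ← expDeg_Am hT, hAm]
      have := Nat.eq_of_mul_eq_mul_left (show 0 < T by omega) h1
      omega
    have ha : a ≠ 0 := fun h => by rw [h, expDeg_zero] at hdeg; omega
    have ha' : a' ≠ 0 := fun h => by rw [h, expDeg_zero] at hdeg'; omega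
    obtain ⟨jm, hjm, htop⟩ := exists_top ha hs
    obtain ⟨jm', hjm', htop'⟩ := exists_top ha' hs'
    have hprof : ∀ t, chS jm.1 t = chS jm'.1 t := by
      intro t
      obtain ⟨h1, h2⟩ := top_profile hjm htop hs t
      obtain ⟨h3, h4⟩ := top_profile hjm' htop' hs' t
      rw [hAm] at h1 h2
      rw [hdeg] at h1 h2
      rw [hdeg'] at h3 h4
      set u1 := chS jm.1 t
      set u2 := chS jm'.1 t
      set tt := tailF (Am (vmap d T n b c p q) a') t
      -- (N+1) u1 ≤ tt + N, tt ≤ (N+1) u1 ; same for u2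
      rcases Nat.lt_trichotomy u1 u2 with hlt | heq | hgt
      · exfalso
        have e1 : (N + 1) * u1 + (N + 1) ≤ (N + 1) * u2 := by
          have : u1 + 1 ≤ u2 := hlt
          calc (N+1) * u1 + (N+1) = (N+1) * (u1+1) := by ring
          _ ≤ (N+1) * u2 := Nat.mul_le_mul_left _ this
        omega
      · exact heq
      · exfalso
        have e1 : (N + 1) * u2 + (N + 1) ≤ (N + 1) * u1 := by
          have : u2 + 1 ≤ u1 := hgt
          calc (N+1) * u2 + (N+1) = (N+1) * (u2+1) := by ring
          _ ≤ (N+1) * u1 := Nat.mul_le_mul_left _ this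
        omega
    have hjmeq : jm = jm' := Subtype.ext (chain_ext jm.2.1 jm'.2.1 hprof)
    subst hjmeq
    -- remove jm from both
    have hle1 : Finsupp.single jm 1 ≤ a := by
      rw [Finsupp.single_le_iff]
      exact Nat.one_le_iff_ne_zero.2 (Finsupp.mem_support_iff.1 hjm)
    have hle2 : Finsupp.single jm 1 ≤ a' := by
      rw [Finsupp.single_le_iff]
      exact Nat.one_le_iff_ne_zero.2 (Finsupp.mem_support_iff.1 hjm')
    have hsplit1 : a = (a - Finsupp.single jm 1) + Finsupp.single jm 1 :=
      (tsub_add_cancel_of_le hle1).symm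
    have hsplit2 : a' = (a' - Finsupp.single jm 1) + Finsupp.single jm 1 :=
      (tsub_add_cancel_of_le hle2).symm
    have hAm2 : Am (vmap d T n b c p q) (a - Finsupp.single jm 1)
        = Am (vmap d T n b c p q) (a' - Finsupp.single jm 1) := by
      have e1 : Am (vmap d T n b c p q) a
          = Am (vmap d T n b c p q) (a - Finsupp.single jm 1)
            + Am (vmap d T n b c p q) (Finsupp.single jm 1) := by
        conv_lhs => rw [hsplit1]
        rw [Am_add]
      have e2 : Am (vmap d T n b c p q) a'
          = Am (vmap d T n b c p q) (a' - Finsupp.single jm 1)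
            + Am (vmap d T n b c p q) (Finsupp.single jm 1) := by
        conv_lhs => rw [hsplit2]
        rw [Am_add]
      rw [e1, e2] at hAm
      exact add_right_cancel hAm
    have hdeg2 : expDeg (a - Finsupp.single jm 1) = N := by
      have := congrArg expDeg hsplit1
      rw [expDeg_add, expDeg_single, hdeg] at this
      omega
    have := ih (a - Finsupp.single jm 1) (a' - Finsupp.single jm 1) hdeg2
      (sortedM_subset Finsupp.support_tsub hs) (sortedM_subset Finsupp.support_tsub hs') hAm2
    rw [hsplit1, hsplit2, this]

end SV

end SGB
namespace SGB

section SV2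

variable {d T n : ℕ} {b c : Fin n → ℕ} {p q : Fin n → Fin d}

/-- the weight on the variables of `K[X]`. -/
noncomputable def wV (d T n : ℕ) (b c : Fin n → ℕ) (p q : Fin n → Fin d) :
    SVIdx d T n b c p q → ℕ := fun j => wRaw j.1

lemma not_pairSorted_ne {j j' : SVIdx d T n b c p q} (h : ¬ PairSorted j.1 j'.1) : j ≠ j' :=
  fun he => h (he ▸ pairSorted_refl j.2.1)

lemma pair_le {σ : Type*} {j j' : σ} (hne : j ≠ j') {a : σ →₀ ℕ}
    (hj : 1 ≤ a j) (hj' : 1 ≤ a j') : Finsupp.single j 1 + Finsupp.single j' 1 ≤ a := by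
  classical
  rw [Finsupp.le_def]
  intro x
  simp only [Finsupp.add_apply, Finsupp.single_apply]
  by_cases h1 : j = x
  · subst h1
    rw [if_pos rfl, if_neg (fun hh : j' = j => hne hh.symm)]
    omega
  · rw [if_neg h1]
    by_cases h2 : j' = x
    · subst h2
      rw [if_pos rfl]
      omega
    · rw [if_neg h2]
      omega

lemma merge_unique {nn nn' : Fin (2 * T) → Fin d} (h : Monotone nn) (h' : Monotone nn')
    (he : vec nn = vec nn') : nn = nn' :=
  chain_ext h h' (fun t => by rw [← tailF_vec, ← tailF_vec, he])

lemma Wt_pair {σ : Type*} (w : σ → ℕ) (j j' : σ) :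
    Wt w (Finsupp.single j 1 + Finsupp.single j' 1) = w j + w j' := by
  rw [Wt_add, Wt_single, Wt_single, one_mul, one_mul]

lemma build_binomial (hpq : ∀ i, p i ≤ q i) (j j' : SVIdx d T n b c p q)
    (hnp1 : ¬ PairSorted j.1 j'.1) (hnp2 : ¬ PairSorted j'.1 j.1) :
    ∃ (nn : Fin (2 * T) → Fin d) (_ : Monotone nn)
      (hu : Monotone (oddPart nn) ∧ vec (oddPart nn) ∈ SVConfig d T n b c p q)
      (hv : Monotone (evenPart nn) ∧ vec (evenPart nn) ∈ SVConfig d T n b c p q),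
      vec nn = vec j.1 + vec j'.1 ∧
      wRaw (oddPart nn) + wRaw (evenPart nn) < wRaw j.1 + wRaw j'.1 ∧
      Finsupp.single j (1:ℕ) + Finsupp.single j' 1
        ≠ Finsupp.single (⟨oddPart nn, hu⟩ : SVIdx d T n b c p q) 1
          + Finsupp.single (⟨evenPart nn, hv⟩ : SVIdx d T n b c p q) 1 := by
  obtain ⟨nn, hmon, hvec⟩ := merge_exists j.1 j'.1
  obtain ⟨hom, hem⟩ := closure hpq hmon hvec j.2.2 j'.2.2
  have hne1 : ¬(j.1 = oddPart nn ∧ j'.1 = evenPart nn) := by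
    rintro ⟨e1, e2⟩
    exact hnp1 (e1 ▸ e2 ▸ pairSorted_odd_even hmon)
  have hne2 : ¬(j.1 = evenPart nn ∧ j'.1 = oddPart nn) := by
    rintro ⟨e1, e2⟩
    exact hnp2 (e1 ▸ e2 ▸ (pairSorted_odd_even hmon))
  refine ⟨nn, hmon, ⟨oddPart_monotone hmon, hom⟩, ⟨evenPart_monotone hmon, hem⟩, hvec,
    wkey j.2.1 j'.2.1 hmon hvec hne1 hne2, ?_⟩
  intro hEq
  rcases single_pair_eq hEq with ⟨e1, e2⟩ | ⟨e1, e2⟩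
  · exact hne1 ⟨congrArg Subtype.val e1, congrArg Subtype.val e2⟩
  · exact hne2 ⟨congrArg Subtype.val e1, congrArg Subtype.val e2⟩

lemma sort_step (hpq : ∀ i, p i ≤ q i) {a' : SVIdx d T n b c p q →₀ ℕ}
    (hns : ¬ SortedM a') :
    ∃ a'', Am (vmap d T n b c p q) a'' = Am (vmap d T n b c p q) a' ∧
      Wt (wV d T n b c p q) a'' < Wt (wV d T n b c p q) a' := by
  classical
  unfold SortedM at hns
  push_neg at hns
  obtain ⟨j, hj, j', hj', hnp1, hnp2⟩ := hns
  have hne : j ≠ j' := not_pairSorted_ne hnp1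
  obtain ⟨nn, hmon, hu, hv, hvec, hw, -⟩ := build_binomial hpq j j' hnp1 hnp2
  set u : SVIdx d T n b c p q := ⟨oddPart nn, hu⟩
  set v2 : SVIdx d T n b c p q := ⟨evenPart nn, hv⟩
  set e : SVIdx d T n b c p q →₀ ℕ := Finsupp.single j 1 + Finsupp.single j' 1
  set e' : SVIdx d T n b c p q →₀ ℕ := Finsupp.single u 1 + Finsupp.single v2 1
  have he_le : e ≤ a' := pair_le hne
    (Nat.one_le_iff_ne_zero.2 (Finsupp.mem_support_iff.1 hj))
    (Nat.one_le_iff_ne_zero.2 (Finsupp.mem_support_iff.1 hj'))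
  have hAm_e : Am (vmap d T n b c p q) e = vec j.1 + vec j'.1 := by
    rw [Am_add, Am_single, Am_single, one_smul, one_smul]
    rfl
  have hAm_e' : Am (vmap d T n b c p q) e' = vec j.1 + vec j'.1 := by
    rw [Am_add, Am_single, Am_single, one_smul, one_smul]
    show vec (oddPart nn) + vec (evenPart nn) = _
    rw [vec_odd_even hmon, hvec]
  refine ⟨a' - e + e', ?_, ?_⟩
  · rw [Am_add, hAm_e', ← hAm_e, ← Am_add, tsub_add_cancel_of_le he_le]
  · have h1 : Wt (wV d T n b c p q) (a' - e + e') = Wt (wV d T n b c p q) (a' - e)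
        + (wRaw (oddPart nn) + wRaw (evenPart nn)) := by
      rw [Wt_add, Wt_pair]
      rfl
    have h2 : Wt (wV d T n b c p q) a' = Wt (wV d T n b c p q) (a' - e)
        + (wRaw j.1 + wRaw j'.1) := by
      conv_lhs => rw [← tsub_add_cancel_of_le he_le]
      rw [Wt_add, Wt_pair]
      rfl
    omega

lemma sorted_min (hT : 1 ≤ T) (hpq : ∀ i, p i ≤ q i) {a : SVIdx d T n b c p q →₀ ℕ}
    (hs : SortedM a) :
    ∀ (W : ℕ) (a' : SVIdx d T n b c p q →₀ ℕ), Wt (wV d T n b c p q) a' = W →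
      Am (vmap d T n b c p q) a' = Am (vmap d T n b c p q) a → a' ≠ a →
      Wt (wV d T n b c p q) a < Wt (wV d T n b c p q) a' := by
  intro W
  induction W using Nat.strong_induction_on with
  | _ W ih =>
    intro a' hW hAm hne
    by_cases hs' : SortedM a'
    · exact absurd (sorted_unique hT (expDeg a') a' a rfl hs' hs hAm) hne
    · obtain ⟨a'', hAm2, hW2⟩ := sort_step hpq hs'
      by_cases h2 : a'' = a
      · rw [← h2]
        omega
      · have := ih (Wt (wV d T n b c p q) a'') (by omega) a'' rfl (hAm2.trans hAm) h2
        omega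

end SV2

end SGB

open SGB

/-- Theorem `sortingGB`: for the Segre–Veronese configuration there is a
monomial order for which the sorting binomials form the reduced Gröbner basis of the toric
ideal, and the initial ideal is generated by squarefree quadratic (nonsorted) monomials. -/
theorem segre_veronese_sortingGB
    {K : Type*} [Field K] (d τ n : ℕ) (hτ : 2 ≤ τ)
    (b c : Fin n → ℕ) (p q : Fin n → Fin d)
    (hcb : ∀ i, c i ≤ b i) (hpq : ∀ i, p i ≤ q i) :
    ∃ r, IsMonomialOrder r ∧
      IsReducedGroebnerBasis r
        (toricIdeal K (fun j : SVIdx d τ n b c p q => ∑ k, Finsupp.single (j.1 k) 1))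
        (sortingSet K d τ n b c p q) ∧
      ∃ S : Set (MvPolynomial (SVIdx d τ n b c p q) K),
        (∀ s ∈ S, ∃ l m : SVIdx d τ n b c p q, l ≠ m ∧
          ¬ PairSorted l.1 m.1 ∧ ¬ PairSorted m.1 l.1 ∧
          s = MvPolynomial.X l * MvPolynomial.X m) ∧
        initialIdeal r
            (toricIdeal K (fun j : SVIdx d τ n b c p q => ∑ k, Finsupp.single (j.1 k) 1)) =
          Ideal.span S := by
  classical
  have hT : 1 ≤ τ := by omega
  letI : LinearOrder (SVIdx d τ n b c p q) :=
    LinearOrder.lift' (fun j => ((Fintype.equivFin (Fin τ → Fin d)) j.1 : ℕ))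
      (fun x y hxy => Subtype.ext ((Fintype.equivFin _).injective (Fin.val_injective hxy)))
  have hvm : (fun j : SVIdx d τ n b c p q => ∑ k, Finsupp.single (j.1 k) 1)
      = vmap d τ n b c p q := rfl
  rw [hvm]
  have hXX : ∀ x y : SVIdx d τ n b c p q, (MvPolynomial.X x * MvPolynomial.X y :
      MvPolynomial (SVIdx d τ n b c p q) K)
      = MvPolynomial.monomial (Finsupp.single x 1 + Finsupp.single y 1) 1 := fun x y => by
    rw [show (MvPolynomial.X x : MvPolynomial (SVIdx d τ n b c p q) K)
        = MvPolynomial.monomial (Finsupp.single x 1) 1 from rfl,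
      show (MvPolynomial.X y : MvPolynomial (SVIdx d τ n b c p q) K)
        = MvPolynomial.monomial (Finsupp.single y 1) 1 from rfl,
      MvPolynomial.monomial_mul, one_mul]
  -- G ⊆ I
  have hGsub : ∀ g ∈ sortingSet K d τ n b c p q,
      g ∈ toricIdeal K (vmap d τ n b c p q) := by
    rintro g ⟨l, m0, nn, hmon, hsum, h1, h2, rfl⟩
    have hsum' : vec nn = vec l.1 + vec m0.1 := hsum
    show _ ∈ RingHom.ker _
    rw [RingHom.mem_ker, map_sub, map_mul, map_mul, toricHom_X, toricHom_X, toricHom_X,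
      toricHom_X, MvPolynomial.monomial_mul, MvPolynomial.monomial_mul, sub_eq_zero]
    have hAB : vmap d τ n b c p q l + vmap d τ n b c p q m0
        = vmap d τ n b c p q ⟨oddPart nn, h1⟩ + vmap d τ n b c p q ⟨evenPart nn, h2⟩ := by
      show vec l.1 + vec m0.1 = vec (oddPart nn) + vec (evenPart nn)
      rw [vec_odd_even hmon]
      exact hsum'.symm
    rw [hAB]
  -- the key pair extraction from leading monomials of elements of I
  have hkey : ∀ f : MvPolynomial (SVIdx d τ n b c p q) K,
      f ∈ toricIdeal K (vmap d τ n b c p q) → f ≠ 0 →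
      ∀ mf, IsLeadingMonomial (rord (wV d τ n b c p q)) f mf →
      ∃ j j' : SVIdx d τ n b c p q, j ≠ j' ∧ ¬PairSorted j.1 j'.1 ∧ ¬PairSorted j'.1 j.1 ∧
        Finsupp.single j 1 + Finsupp.single j' 1 ≤ mf := by
    rintro f hf hf0 mf ⟨hmem, hmax⟩
    obtain ⟨a', ha'supp, ha'ne, ha'Am⟩ :=
      ker_fiber (show toricHom K (vmap d τ n b c p q) f = 0 from RingHom.mem_ker.1 hf) hmem
    by_cases hs : SortedM mf
    · exfalso
      have h1 := sorted_min hT hpq hs (Wt (wV d τ n b c p q) a') a' rfl ha'Am ha'ne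
      have h2 := rord_wt_le (hmax a' ha'supp)
      omega
    · unfold SortedM at hs
      push_neg at hs
      obtain ⟨j, hj, j', hj', hnp1, hnp2⟩ := hs
      exact ⟨j, j', not_pairSorted_ne hnp1, hnp1, hnp2,
        pair_le (not_pairSorted_ne hnp1)
          (Nat.one_le_iff_ne_zero.2 (Finsupp.mem_support_iff.1 hj))
          (Nat.one_le_iff_ne_zero.2 (Finsupp.mem_support_iff.1 hj'))⟩
  -- construction of the sorting binomial with given leading monomial
  have hbin : ∀ j j' : SVIdx d τ n b c p q, ¬PairSorted j.1 j'.1 → ¬PairSorted j'.1 j.1 →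
      ∃ g, g ∈ sortingSet K d τ n b c p q ∧ g ≠ 0 ∧
        IsLeadingMonomial (rord (wV d τ n b c p q)) g
          (Finsupp.single j 1 + Finsupp.single j' 1) := by
    intro j j' hnp1 hnp2
    obtain ⟨nn, hmon, hu, hv, hvec, hw, hee'⟩ := build_binomial hpq j j' hnp1 hnp2
    set u : SVIdx d τ n b c p q := ⟨oddPart nn, hu⟩ with hudef
    set v2 : SVIdx d τ n b c p q := ⟨evenPart nn, hv⟩ with hv2def
    set e : SVIdx d τ n b c p q →₀ ℕ := Finsupp.single j 1 + Finsupp.single j' 1 with hedef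
    set e' : SVIdx d τ n b c p q →₀ ℕ := Finsupp.single u 1 + Finsupp.single v2 1 with he'def
    have hgX : (MvPolynomial.X j * MvPolynomial.X j' - MvPolynomial.X u * MvPolynomial.X v2 :
        MvPolynomial (SVIdx d τ n b c p q) K)
        = MvPolynomial.monomial e 1 - MvPolynomial.monomial e' 1 := by
      rw [hXX, hXX]
    have hWlt : Wt (wV d τ n b c p q) e' < Wt (wV d τ n b c p q) e := by
      rw [hedef, he'def, Wt_pair, Wt_pair]
      exact hw
    refine ⟨_, ⟨j, j', nn, hmon, hvec, hu, hv, rfl⟩, ?_, ?_, ?_⟩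
    · rw [hgX]
      intro h0
      have hc := coeff_binomial (K := K) hee'
      rw [h0, MvPolynomial.coeff_zero] at hc
      exact one_ne_zero hc.symm
    · rw [hgX, support_binomial hee']
      exact Finset.mem_insert_self _ _
    · intro m' hm'
      rw [hgX, support_binomial hee'] at hm'
      rcases Finset.mem_insert.1 hm' with rfl | hm'
      · exact rord_refl _ _
      · rw [Finset.mem_singleton] at hm'
        subst hm'
        exact Or.inl hWlt
  refine ⟨rord (wV d τ n b c p q), rord_isMonomialOrder _, ⟨⟨hGsub, ?_⟩, ?_, ?_⟩, ?_⟩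
  · -- division property
    intro f hf hf0 mf hLM
    obtain ⟨j, j', hne, hnp1, hnp2, hle⟩ := hkey f hf hf0 mf hLM
    obtain ⟨g, hgG, hgne, hgLM⟩ := hbin j j' hnp1 hnp2
    exact ⟨g, hgG, _, hgLM, hle⟩
  · -- leading coefficients are 1
    rintro g ⟨l, m0, nn, hmon, hsum, h1, h2, rfl⟩ m hLM
    have hsum' : vec nn = vec l.1 + vec m0.1 := hsum
    set u : SVIdx d τ n b c p q := ⟨oddPart nn, h1⟩ with hudef
    set v2 : SVIdx d τ n b c p q := ⟨evenPart nn, h2⟩ with hv2def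
    set e : SVIdx d τ n b c p q →₀ ℕ := Finsupp.single l 1 + Finsupp.single m0 1 with hedef
    set e' : SVIdx d τ n b c p q →₀ ℕ := Finsupp.single u 1 + Finsupp.single v2 1 with he'def
    have hgX : (MvPolynomial.X l * MvPolynomial.X m0 - MvPolynomial.X u * MvPolynomial.X v2 :
        MvPolynomial (SVIdx d τ n b c p q) K)
        = MvPolynomial.monomial e 1 - MvPolynomial.monomial e' 1 := by
      rw [hXX, hXX]
    by_cases hee' : e = e'
    · exfalso
      have := hLM.1
      rw [hgX, hee', sub_self] at this
      simp at this
    · have hne1 : ¬(l.1 = oddPart nn ∧ m0.1 = evenPart nn) := by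
        rintro ⟨x1, x2⟩
        exact hee' (by rw [hedef, he'def, (Subtype.ext x1 : l = u), (Subtype.ext x2 : m0 = v2)])
      have hne2 : ¬(l.1 = evenPart nn ∧ m0.1 = oddPart nn) := by
        rintro ⟨x1, x2⟩
        refine hee' ?_
        rw [hedef, he'def, (Subtype.ext x1 : l = v2), (Subtype.ext x2 : m0 = u)]
        exact add_comm _ _
      have hWlt : Wt (wV d τ n b c p q) e' < Wt (wV d τ n b c p q) e := by
        rw [hedef, he'def, Wt_pair, Wt_pair]
        exact wkey l.2.1 m0.2.1 hmon hsum' hne1 hne2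
      have hm := hLM.1
      rw [hgX, support_binomial hee'] at hm
      rcases Finset.mem_insert.1 hm with rfl | hm
      · rw [hgX]
        exact coeff_binomial hee'
      · exfalso
        rw [Finset.mem_singleton] at hm
        subst hm
        have := rord_wt_le (hLM.2 e
          (by rw [hgX, support_binomial hee']; exact Finset.mem_insert_self _ _))
        omega
  · -- reducedness: no leading monomial divides a monomial of another element
    rintro g ⟨l, m0, nn, hmon, hsum, h1, h2, rfl⟩ g'
      ⟨l', m1, nn', hmon', hsum', h1', h2', rfl⟩ hne' m hm m' hLM' hle
    have hsumv : vec nn = vec l.1 + vec m0.1 := hsum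
    have hsumv' : vec nn' = vec l'.1 + vec m1.1 := hsum'
    set u : SVIdx d τ n b c p q := ⟨oddPart nn, h1⟩ with hudef
    set v2 : SVIdx d τ n b c p q := ⟨evenPart nn, h2⟩ with hv2def
    set u' : SVIdx d τ n b c p q := ⟨oddPart nn', h1'⟩ with hu'def
    set v2' : SVIdx d τ n b c p q := ⟨evenPart nn', h2'⟩ with hv2'def
    set e : SVIdx d τ n b c p q →₀ ℕ := Finsupp.single l 1 + Finsupp.single m0 1 with hedef
    set e2 : SVIdx d τ n b c p q →₀ ℕ := Finsupp.single u 1 + Finsupp.single v2 1 with he2def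
    set eq1 : SVIdx d τ n b c p q →₀ ℕ := Finsupp.single l' 1 + Finsupp.single m1 1 with heq1def
    set eq2 : SVIdx d τ n b c p q →₀ ℕ := Finsupp.single u' 1 + Finsupp.single v2' 1
      with heq2def
    have hgX : (MvPolynomial.X l * MvPolynomial.X m0 - MvPolynomial.X u * MvPolynomial.X v2 :
        MvPolynomial (SVIdx d τ n b c p q) K)
        = MvPolynomial.monomial e 1 - MvPolynomial.monomial e2 1 := by rw [hXX, hXX]
    have hgX' : (MvPolynomial.X l' * MvPolynomial.X m1
        - MvPolynomial.X u' * MvPolynomial.X v2' :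
        MvPolynomial (SVIdx d τ n b c p q) K)
        = MvPolynomial.monomial eq1 1 - MvPolynomial.monomial eq2 1 := by rw [hXX, hXX]
    -- g' is nonzero
    by_cases hz' : eq1 = eq2
    · have := hLM'.1
      rw [hgX', hz', sub_self] at this
      simp at this
    -- g is nonzero
    by_cases hz : e = e2
    · rw [hgX, hz, sub_self] at hm
      simp at hm
    -- m' is the nonsorted monomial of g'
    have hne1' : ¬(l'.1 = oddPart nn' ∧ m1.1 = evenPart nn') := by
      rintro ⟨x1, x2⟩
      exact hz' (by rw [heq1def, heq2def, (Subtype.ext x1 : l' = u'), (Subtype.ext x2 : m1 = v2')])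
    have hne2' : ¬(l'.1 = evenPart nn' ∧ m1.1 = oddPart nn') := by
      rintro ⟨x1, x2⟩
      refine hz' ?_
      rw [heq1def, heq2def, (Subtype.ext x1 : l' = v2'), (Subtype.ext x2 : m1 = u')]
      exact add_comm _ _
    have hWlt' : Wt (wV d τ n b c p q) eq2 < Wt (wV d τ n b c p q) eq1 := by
      rw [heq1def, heq2def, Wt_pair, Wt_pair]
      exact wkey l'.2.1 m1.2.1 hmon' hsumv' hne1' hne2'
    have hm'eq : m' = eq1 := by
      have hmem := hLM'.1
      rw [hgX', support_binomial hz'] at hmem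
      rcases Finset.mem_insert.1 hmem with rfl | hmem
      · rfl
      · exfalso
        rw [Finset.mem_singleton] at hmem
        subst hmem
        have := rord_wt_le (hLM'.2 eq1
          (by rw [hgX', support_binomial hz']; exact Finset.mem_insert_self _ _))
        omega
    subst hm'eq
    -- m ∈ {e, e2} and degrees
    rw [hgX, support_binomial hz] at hm
    have hdeg1 : expDeg eq1 = 2 := by
      rw [heq1def, expDeg_add, expDeg_single, expDeg_single]
    have hmdeg : expDeg m = 2 := by
      rcases Finset.mem_insert.1 hm with rfl | hm2
      · rw [hedef, expDeg_add, expDeg_single, expDeg_single]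
      · rw [Finset.mem_singleton] at hm2
        subst hm2
        rw [he2def, expDeg_add, expDeg_single, expDeg_single]
    have hmeq : eq1 = m := eq_of_le_of_expDeg_eq hle (by rw [hdeg1, hmdeg])
    rcases Finset.mem_insert.1 hm with rfl | hm2
    · -- m = e : then g' = g
      apply hne'
      rcases single_pair_eq (hmeq :
          Finsupp.single l' (1:ℕ) + Finsupp.single m1 1
            = Finsupp.single l 1 + Finsupp.single m0 1) with ⟨x1, x2⟩ | ⟨x1, x2⟩
      · have hnneq : nn' = nn := merge_unique hmon' hmon (by rw [hsumv', hsumv, x1, x2])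
        subst hnneq
        rw [x1, x2]
      · have hnneq : nn' = nn := merge_unique hmon' hmon
          (by rw [hsumv', hsumv, x1, x2]; exact add_comm _ _)
        subst hnneq
        rw [x1, x2, mul_comm (MvPolynomial.X m0) (MvPolynomial.X l)]
    · -- m = e2 : then g' would be zero
      exfalso
      rw [Finset.mem_singleton] at hm2
      subst hm2
      apply hz'
      rcases single_pair_eq (hmeq :
          Finsupp.single l' (1:ℕ) + Finsupp.single m1 1
            = Finsupp.single u 1 + Finsupp.single v2 1) with ⟨x1, x2⟩ | ⟨x1, x2⟩
      · have hnneq : nn' = nn := merge_unique hmon' hmon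
          (by rw [hsumv', x1, x2]
              show vec u.1 + vec v2.1 = vec nn
              rw [hudef, hv2def]
              exact vec_odd_even hmon)
        subst hnneq
        rw [heq1def, heq2def, x1, x2]
      · have hnneq : nn' = nn := merge_unique hmon' hmon
          (by rw [hsumv', x1, x2]
              show vec v2.1 + vec u.1 = vec nn
              rw [hudef, hv2def, add_comm]
              exact vec_odd_even hmon)
        subst hnneq
        rw [heq1def, heq2def, x1, x2]
        exact add_comm _ _
  · -- the initial ideal
    refine ⟨{s | ∃ l m : SVIdx d τ n b c p q, l ≠ m ∧ ¬ PairSorted l.1 m.1 ∧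
      ¬ PairSorted m.1 l.1 ∧ s = MvPolynomial.X l * MvPolynomial.X m},
      fun s hs => hs, ?_⟩
    apply le_antisymm
    · apply Ideal.span_le.2
      rintro pp ⟨f, hfI, hf0, mf, hLMf, rfl⟩
      obtain ⟨j, j', hne, hnp1, hnp2, hle⟩ := hkey f hfI hf0 mf hLMf
      have heq : MvPolynomial.monomial mf (1:K)
          = (MvPolynomial.X j * MvPolynomial.X j')
            * MvPolynomial.monomial (mf - (Finsupp.single j 1 + Finsupp.single j' 1)) 1 := by
        rw [hXX, MvPolynomial.monomial_mul, one_mul, add_tsub_cancel_of_le hle]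
      rw [heq]
      exact SetLike.mem_coe.2 (Ideal.mul_mem_right _ _
        (Ideal.subset_span ⟨j, j', hne, hnp1, hnp2, rfl⟩))
    · apply Ideal.span_le.2
      rintro s ⟨l, m0, hne, hnp1, hnp2, rfl⟩
      obtain ⟨g, hgG, hgne, hgLM⟩ := hbin l m0 hnp1 hnp2
      have heq : (MvPolynomial.X l * MvPolynomial.X m0 :
          MvPolynomial (SVIdx d τ n b c p q) K)
          = MvPolynomial.monomial (Finsupp.single l 1 + Finsupp.single m0 1) 1 := hXX l m0
      rw [heq]
      exact SetLike.mem_coe.2 (Ideal.subset_span ⟨g, hGsub g hgG, hgne, _, hgLM, rfl⟩)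
end
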